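/- arXiv:1610.09544 — 5 statements merged into one kernel-verified Lean document; each statement's English description precedes it below -/
import Mathlib

section
/- Let L be a Lie algebra containing nonzero elements y, y₁, y₂, … with [y, yᵢ] = αᵢ yᵢ for scalars αᵢ ∈ ℂ. For any finite dimensional representation ρ of L on a vector space U, the set of distinct values αᵢ for which ρ(yᵢ) ≠ 0 has cardinality at most (dim U)² − dim U + 1. -/
open Module

/-- If `B ≠ 0` satisfies `A*B - B*A = μ • B` then `μ` is a difference of eigenvalues of `A`. -/
lemma aux_diff_eigenvalues {U : Type*} [AddCommGroup U] [Module ℂ U] [FiniteDimensional ℂ U]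
    (A B : Module.End ℂ U) (μ : ℂ) (hB : B ≠ 0) (h : A * B - B * A = μ • B) :
    ∃ l₁ l₂ : ℂ, A.HasEigenvalue l₁ ∧ A.HasEigenvalue l₂ ∧ μ = l₁ - l₂ := by
  -- find a generalized eigenvector `v` with `B v ≠ 0`
  have htop := Module.End.iSup_maxGenEigenspace_eq_top A
  have hvex : ∃ (lam : ℂ) (v : U), v ∈ A.maxGenEigenspace lam ∧ B v ≠ 0 := by
    by_contra hc
    push_neg at hc
    apply hB
    have hker : ⊤ ≤ LinearMap.ker B := by
      rw [← htop]
      refine iSup_le fun lam x hx => ?_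
      exact LinearMap.mem_ker.mpr (hc lam x hx)
    ext v
    simpa using LinearMap.mem_ker.mp (hker (Submodule.mem_top (x := v)))
  obtain ⟨lam, v, hv, hBv⟩ := hvex
  have hv0 : v ≠ 0 := fun hv0 => hBv (by simp [hv0])
  obtain ⟨k, hk⟩ := (Module.End.mem_maxGenEigenspace A lam v).mp hv
  -- `lam` is an eigenvalue
  have hlam : A.HasEigenvalue lam := by
    refine Module.End.hasEigenvalue_of_hasGenEigenvalue (k := k) ?_
    rw [Module.End.hasGenEigenvalue_iff]
    intro hbot
    apply hv0
    have : v ∈ A.genEigenspace lam k := by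
      rw [Module.End.mem_genEigenspace_nat]
      exact hk
    rw [hbot] at this
    simpa using this
  -- the commutation identity
  have hcomm : (A - (lam + μ) • 1) * B = B * (A - lam • 1) := by
    have hAB : A * B = B * A + μ • B := by
      rw [← h]; abel
    calc (A - (lam + μ) • 1) * B = A * B - (lam + μ) • B := by
          rw [sub_mul, smul_mul_assoc, one_mul]
      _ = B * A + μ • B - (lam + μ) • B := by rw [hAB]
      _ = B * A - lam • B := by rw [add_smul]; abel
      _ = B * (A - lam • 1) := by rw [mul_sub, mul_smul_comm, mul_one]
  have hcommk : ∀ k : ℕ, (A - (lam + μ) • 1) ^ k * B = B * (A - lam • 1) ^ k := by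
    intro k
    induction k with
    | zero => simp
    | succ n ih =>
      rw [pow_succ, pow_succ, mul_assoc, hcomm, ← mul_assoc, ih, mul_assoc]
  -- `B v` lies in the generalized eigenspace for `lam + μ`
  have hBv_mem : B v ∈ A.maxGenEigenspace (lam + μ) := by
    rw [Module.End.mem_maxGenEigenspace]
    refine ⟨k, ?_⟩
    have := congrArg (fun f : Module.End ℂ U => f v) (hcommk k)
    simp only [Module.End.mul_apply] at this
    rw [this, hk, map_zero]
  obtain ⟨k', hk'⟩ := (Module.End.mem_maxGenEigenspace A (lam + μ) (B v)).mp hBv_mem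
  have hlamμ : A.HasEigenvalue (lam + μ) := by
    refine Module.End.hasEigenvalue_of_hasGenEigenvalue (k := k') ?_
    rw [Module.End.hasGenEigenvalue_iff]
    intro hbot
    apply hBv
    have : B v ∈ A.genEigenspace (lam + μ) k' := by
      rw [Module.End.mem_genEigenspace_nat]
      exact hk'
    rw [hbot] at this
    simpa using this
  exact ⟨lam + μ, lam, hlamμ, hlam, by ring⟩

/-- The number of eigenvalues is at most the dimension. -/
lemma aux_card_eigenvalues {U : Type*} [AddCommGroup U] [Module ℂ U] [FiniteDimensional ℂ U]
    (A : Module.End ℂ U) : {μ : ℂ | A.HasEigenvalue μ}.ncard ≤ Module.finrank ℂ U := by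
  classical
  have hfin : {μ : ℂ | A.HasEigenvalue μ}.Finite := A.finite_hasEigenvalue
  haveI : Fintype {μ : ℂ | A.HasEigenvalue μ} := hfin.fintype
  set E : Set ℂ := {μ : ℂ | A.HasEigenvalue μ}
  choose xs hxs using fun μ : E => Module.End.HasEigenvalue.exists_hasEigenvector μ.2
  have hli : LinearIndependent ℂ xs := A.eigenvectors_linearIndependent E xs hxs
  calc E.ncard = Fintype.card E := by
        rw [Set.ncard_eq_toFinset_card', Set.toFinset_card]
    _ ≤ Module.finrank ℂ U := hli.fintype_card_le_finrank

attribute [local instance 100] LieRing.ofAssociativeRing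

/-- If a Lie algebra `L` contains nonzero elements `y, y₁, y₂, …` with `[y, yᵢ] = αᵢ yᵢ`,
then in any finite dimensional representation `(U, ρ)` of `L`, the number of distinct values
`αᵢ` for which `ρ(yᵢ) ≠ 0` is at most `(dim U)² − dim U + 1`. -/
theorem stmt1 {L : Type*} [LieRing L] [LieAlgebra ℂ L]
    {U : Type*} [AddCommGroup U] [Module ℂ U] [FiniteDimensional ℂ U]
    (ρ : L →ₗ⁅ℂ⁆ Module.End ℂ U)
    (y : L) (ys : ℕ → L) (α : ℕ → ℂ)
    (hy : y ≠ 0) (hys : ∀ i, ys i ≠ 0)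
    (hbr : ∀ i, ⁅y, ys i⁆ = α i • ys i) :
    {a : ℂ | ∃ i, α i = a ∧ ρ (ys i) ≠ 0}.ncard
      ≤ (Module.finrank ℂ U) ^ 2 - Module.finrank ℂ U + 1 := by
  classical
  set n := Module.finrank ℂ U
  set A := ρ y
  set E : Set ℂ := {μ : ℂ | A.HasEigenvalue μ}
  have hEfin : E.Finite := A.finite_hasEigenvalue
  set s : Finset ℂ := hEfin.toFinset with hs
  set D : Finset ℂ := insert 0 (s.offDiag.image fun p => p.1 - p.2) with hD
  -- the set in question is contained in D
  have hsub : {a : ℂ | ∃ i, α i = a ∧ ρ (ys i) ≠ 0} ⊆ (D : Set ℂ) := by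
    rintro a ⟨i, rfl, hne⟩
    have hbrac : A * ρ (ys i) - ρ (ys i) * A = α i • ρ (ys i) := by
      have h1 : ρ ⁅y, ys i⁆ = ⁅A, ρ (ys i)⁆ := ρ.map_lie y (ys i)
      rw [hbr i, map_smul] at h1
      rw [← Ring.lie_def, ← h1]
    obtain ⟨l₁, l₂, hl₁, hl₂, heq⟩ :=
      aux_diff_eigenvalues A (ρ (ys i)) (α i) hne hbrac
    by_cases hz : l₁ = l₂
    · simp only [hD, Finset.coe_insert, Set.mem_insert_iff]
      left; rw [heq, hz, sub_self]
    · simp only [hD, Finset.coe_insert, Set.mem_insert_iff]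
      right
      simp only [Finset.coe_image, Set.mem_image]
      refine ⟨(l₁, l₂), ?_, heq.symm⟩
      simp only [Finset.mem_coe, Finset.mem_offDiag]
      exact ⟨by simp [hs, Set.Finite.mem_toFinset]; exact hl₁,
        by simp [hs, Set.Finite.mem_toFinset]; exact hl₂, hz⟩
  have h1 : {a : ℂ | ∃ i, α i = a ∧ ρ (ys i) ≠ 0}.ncard ≤ D.card := by
    calc {a : ℂ | ∃ i, α i = a ∧ ρ (ys i) ≠ 0}.ncard
        ≤ (D : Set ℂ).ncard := Set.ncard_le_ncard hsub (D.finite_toSet)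
      _ = D.card := Set.ncard_coe_finset D
  have hsn : s.card ≤ n := by
    have := aux_card_eigenvalues A
    rwa [Set.ncard_eq_toFinset_card _ hEfin] at this
  have h2 : D.card ≤ s.card * s.card - s.card + 1 := by
    calc D.card ≤ (s.offDiag.image fun p => p.1 - p.2).card + 1 := by
          rw [hD]
          have := Finset.card_insert_le (0 : ℂ) (s.offDiag.image fun p => p.1 - p.2)
          omega
      _ ≤ s.offDiag.card + 1 := by
          have := Finset.card_image_le (f := fun p : ℂ × ℂ => p.1 - p.2) (s := s.offDiag)
          omega
      _ = s.card * s.card - s.card + 1 := by rw [Finset.offDiag_card]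
  have h3 : s.card * s.card - s.card + 1 ≤ n ^ 2 - n + 1 := by
    have hmul : s.card * s.card - s.card = s.card * (s.card - 1) := by
      cases s.card with
      | zero => simp
      | succ m =>
        have : (m + 1) * (m + 1) = (m + 1) * m + (m + 1) := by ring
        simp only [Nat.succ_sub_one]
        omega
    have hmul2 : n ^ 2 - n = n * (n - 1) := by
      cases n with
      | zero => simp
      | succ m =>
        have : (m + 1) ^ 2 = (m + 1) * m + (m + 1) := by ring
        simp only [Nat.succ_sub_one]
        omega
    rw [hmul, hmul2]
    have := Nat.mul_le_mul hsn (Nat.sub_le_sub_right hsn 1)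
    omega
  omega
end

section
/- Suppose J = A_N ⊗ V where V is a vector space, and for each r ∈ ℤ^N operators H(r) ∈ End(V) are defined with h(r)(t^s ⊗ v) = Σ_{i=1}^m (r_{m+i} s_i − r_i s_{m+i}) t^{r+s} ⊗ v + t^{r+s} ⊗ H(r)v defining an action of the Hamiltonian algebra H_N. Then the operators satisfy [H(r), H(s)] = Σ_{i=1}^m (r_i s_{m+i} − r_{m+i} s_i)(H(r) + H(s) − H(r+s)) for all r, s ∈ ℤ^N. -/
open Sum

/-- Suppose `J = A_N ⊗ V` (with `ι s v` representing `t^s ⊗ v`, each `ι s` injective),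
and `h(r)` acts on `J` by operators `hop r` satisfying the Hamiltonian algebra relations
`[h(r), h(s)] = Σᵢ (r_{m+i}sᵢ − rᵢs_{m+i}) h(r+s)`, via
`h(r)(t^s ⊗ v) = Σᵢ (r_{m+i}sᵢ − rᵢs_{m+i}) t^{r+s} ⊗ v + t^{r+s} ⊗ H(r)v`.
Then `[H(r), H(s)] = Σᵢ (rᵢs_{m+i} − r_{m+i}sᵢ)(H(r) + H(s) − H(r+s))`.
Coordinates `1,…,m` are indexed by `inl i` and `m+1,…,2m` by `inr i`. -/
theorem stmt5 {m : ℕ} {V J : Type*}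
    [AddCommGroup V] [Module ℂ V] [AddCommGroup J] [Module ℂ J]
    (ι : (Fin m ⊕ Fin m → ℤ) → V →ₗ[ℂ] J)
    (hι : ∀ s, Function.Injective (ι s))
    (hop : (Fin m ⊕ Fin m → ℤ) → Module.End ℂ J)
    (H : (Fin m ⊕ Fin m → ℤ) → Module.End ℂ V)
    (hbr : ∀ r s : Fin m ⊕ Fin m → ℤ,
      ⁅hop r, hop s⁆ = ∑ i : Fin m,
        ((r (inr i) * s (inl i) - r (inl i) * s (inr i) : ℤ) : ℂ) • hop (r + s))
    (hact : ∀ (r s : Fin m ⊕ Fin m → ℤ) (v : V),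
      hop r (ι s v) =
        (∑ i : Fin m, ((r (inr i) * s (inl i) - r (inl i) * s (inr i) : ℤ) : ℂ)) • ι (r + s) v
          + ι (r + s) (H r v)) :
    ∀ r s : Fin m ⊕ Fin m → ℤ,
      ⁅H r, H s⁆ = ∑ i : Fin m,
        ((r (inl i) * s (inr i) - r (inr i) * s (inl i) : ℤ) : ℂ) • (H r + H s - H (r + s)) := by
  intro r s
  set c : ℂ := ∑ i : Fin m, ((r (inr i) * s (inl i) - r (inl i) * s (inr i) : ℤ) : ℂ) with hc
  have hcs : (∑ i : Fin m, ((s (inr i) * r (inl i) - s (inl i) * r (inr i) : ℤ) : ℂ)) = -c := by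
    rw [hc, ← Finset.sum_neg_distrib]
    refine Finset.sum_congr rfl fun i _ => ?_
    push_cast; ring
  have hc' : (∑ i : Fin m, ((r (inl i) * s (inr i) - r (inr i) * s (inl i) : ℤ) : ℂ)) = -c := by
    rw [hc, ← Finset.sum_neg_distrib]
    refine Finset.sum_congr rfl fun i _ => ?_
    push_cast; ring
  ext v
  apply hι (r + s)
  have e0 : ∀ u : Fin m ⊕ Fin m → ℤ, hop u (ι 0 v) = ι u (H u v) := by
    intro u
    simpa using hact u 0 v
  have h1 := congrArg (fun f : Module.End ℂ J => f (ι 0 v)) (hbr r s)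
  simp only [Ring.lie_def, LinearMap.sub_apply, Module.End.mul_apply, e0,
    LinearMap.sum_apply, LinearMap.smul_apply, ← hc] at h1
  rw [hact r s (H s v), hact s r (H r v), hcs, add_comm s r] at h1
  simp only [← Finset.sum_smul] at h1
  rw [← hc] at h1
  -- h1 : c • ι (r+s) (H s v) + ι (r+s) (H r (H s v))
  --      - ((-c) • ι (r+s) (H r v) + ι (r+s) (H s (H r v))) = c • ι (r+s) (H (r+s) v)
  simp only [Ring.lie_def, LinearMap.sub_apply, Module.End.mul_apply, LinearMap.sum_apply,
    LinearMap.smul_apply, LinearMap.add_apply, ← Finset.sum_smul, hc']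
  rw [map_sub, map_smul]
  have expand : ι (r + s) (H r v + H s v - H (r + s) v)
      = ι (r + s) (H r v) + ι (r + s) (H s v) - ι (r + s) (H (r + s) v) := by
    rw [map_sub, map_add]
  rw [expand]
  have h2 : ι (r + s) (H r (H s v)) - ι (r + s) (H s (H r v))
      = c • ι (r + s) (H (r + s) v) - c • ι (r + s) (H s v) + (-c) • ι (r + s) (H r v) := by
    linear_combination (norm := module) h1
  rw [h2]
  module
end

section
/- In the 𝔰𝔭_N-module L_n (n ≥ 1) via the adjoint action of L₀, the element X(n e₁) = −x₁ⁿ ∂/∂x_{m+1} is, up to scalar, the unique weight vector annihilated by all raising operators x_i ∂/∂x_{m+i}, x_i ∂/∂x_j − x_{m+j} ∂/∂x_{m+i} and x_i ∂/∂x_{m+j} + x_j ∂/∂x_{m+i} for i < j (i.e., the unique highest weight vector). -/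
open Sum MvPolynomial

/-- The algebra `ℂ[x₁,…,x_N]`, `N = 2m`, with coordinates `1,…,m` indexed by `inl i`
and `m+1,…,2m` indexed by `inr i`. -/
abbrev PolyA (m : ℕ) := MvPolynomial (Fin m ⊕ Fin m) ℂ

/-- The monomial `x^a`. -/
noncomputable def xpow {m : ℕ} (a : Fin m ⊕ Fin m →₀ ℕ) : PolyA m := monomial a 1

/-- `X(r) = Σ_{i=1}^m (r_{m+i} x^{r−e_{m+i}} ∂/∂xᵢ − rᵢ x^{r−eᵢ} ∂/∂x_{m+i})`. -/
noncomputable def XH {m : ℕ} (r : Fin m ⊕ Fin m →₀ ℕ) : Derivation ℂ (PolyA m) (PolyA m) :=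
  ∑ i : Fin m,
    ((r (inr i) : ℂ) • (xpow (r - Finsupp.single (inr i) 1) • pderiv (inl i))
      - (r (inl i) : ℂ) • (xpow (r - Finsupp.single (inl i) 1) • pderiv (inr i)))

/-- The derivation `x_a ∂/∂x_b`. -/
noncomputable def xd {m : ℕ} (a b : Fin m ⊕ Fin m) : Derivation ℂ (PolyA m) (PolyA m) :=
  (X a : PolyA m) • pderiv b

/-- `L_n = span{X(r) : |r| = n+2}`. -/
noncomputable def Lcomp (m : ℕ) (n : ℕ) : Submodule ℂ (Derivation ℂ (PolyA m) (PolyA m)) :=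
  Submodule.span ℂ {d | ∃ r : Fin m ⊕ Fin m →₀ ℕ, (∑ j, r j) = n + 2 ∧ d = XH r}

/-- `u` is annihilated by the adjoint action of all raising operators
`x_i ∂/∂x_{m+i}`, `x_i ∂/∂x_j − x_{m+j} ∂/∂x_{m+i}` and `x_i ∂/∂x_{m+j} + x_j ∂/∂x_{m+i}`
(`i < j`) of `𝔰𝔭_N ≅ L₀`. -/
def RaisingAnn {m : ℕ} (u : Derivation ℂ (PolyA m) (PolyA m)) : Prop :=
  (∀ i : Fin m, ⁅xd (inl i) (inr i), u⁆ = 0) ∧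
  (∀ i j : Fin m, i < j →
    ⁅xd (inl i) (inl j) - xd (inr j) (inr i), u⁆ = 0 ∧
    ⁅xd (inl i) (inr j) + xd (inl j) (inr i), u⁆ = 0)


/- ### Auxiliary machinery -/

section helpers
variable {m : ℕ}

local notation "σ'" => (Fin m ⊕ Fin m)

lemma deriv_sum_apply {ι : Type*} (s : Finset ι)
    (D : ι → Derivation ℂ (PolyA m) (PolyA m)) (a : PolyA m) :
    (∑ i ∈ s, D i) a = ∑ i ∈ s, D i a := by
  induction s using Finset.cons_induction with
  | empty => simp
  | cons i s hi ih => simp [Finset.sum_cons, Derivation.add_apply, ih]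

lemma coeff_pderiv (b : σ') (p : PolyA m) (s : σ' →₀ ℕ) :
    coeff s (pderiv b p) = ((s b : ℂ) + 1) * coeff (s + Finsupp.single b 1) p := by
  induction p using MvPolynomial.induction_on' with
  | add p q hp hq => simp [hp, hq]; ring
  | monomial a r =>
    rw [pderiv_monomial, coeff_monomial, coeff_monomial]
    by_cases h : a = s + Finsupp.single b 1
    · subst h
      have h1 : s + Finsupp.single b 1 - Finsupp.single b 1 = s := by
        simp
      have h2 : ((s + Finsupp.single b 1 : (Fin m ⊕ Fin m) →₀ ℕ)) b = s b + 1 := by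
        simp
      rw [if_pos h1, if_pos rfl, h2]
      push_cast; ring
    · rw [if_neg h]
      by_cases h2 : a - Finsupp.single b 1 = s
      · rw [if_pos h2]
        have hab : a b = 0 := by
          by_contra hab
          apply h
          rw [← h2, tsub_add_cancel_of_le]
          exact Finsupp.single_le_iff.mpr (Nat.one_le_iff_ne_zero.mpr hab)
        simp [hab]
      · rw [if_neg h2, mul_zero]

lemma coeff_eq_zero_of_pderiv {p : PolyA m} {b : Fin m ⊕ Fin m} (hpd : pderiv b p = 0)
    {a : Fin m ⊕ Fin m →₀ ℕ} (hab : a b ≠ 0) : coeff a p = 0 := by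
  have hthis := coeff_pderiv b p (a - Finsupp.single b 1)
  rw [hpd, coeff_zero] at hthis
  have hle : Finsupp.single b 1 ≤ a :=
    Finsupp.single_le_iff.mpr (Nat.one_le_iff_ne_zero.mpr hab)
  rw [tsub_add_cancel_of_le hle] at hthis
  set s' : (Fin m ⊕ Fin m) →₀ ℕ := a - Finsupp.single b 1 with hs'
  have hne : ((s' b : ℂ) + 1) ≠ 0 := by exact_mod_cast Nat.succ_ne_zero (s' b)
  exact ((mul_eq_zero.mp hthis.symm).resolve_left hne)

lemma eq_zero_of_pderiv_eq_zero {p : PolyA m} (h0 : constantCoeff p = 0)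
    (h : ∀ j, pderiv j p = 0) : p = 0 := by
  ext a
  by_cases ha : a = 0
  · subst ha; exact (congrFun constantCoeff_eq p).symm.trans (h0.trans (coeff_zero 0).symm)
  · obtain ⟨b, hb⟩ := Finsupp.ne_iff.mp ha
    simp only [Finsupp.coe_zero, Pi.zero_apply] at hb
    have := coeff_pderiv b p (a - Finsupp.single b 1)
    rw [h b, coeff_zero] at this
    have hle : Finsupp.single b 1 ≤ a :=
      Finsupp.single_le_iff.mpr (Nat.one_le_iff_ne_zero.mpr hb)
    rw [tsub_add_cancel_of_le hle] at this
    set s' : (Fin m ⊕ Fin m) →₀ ℕ := a - Finsupp.single b 1 with hs'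
    have hne : ((s' b : ℂ) + 1) ≠ 0 := by exact_mod_cast Nat.succ_ne_zero (s' b)
    simpa [coeff_zero] using ((mul_eq_zero.mp this.symm).resolve_left hne)

lemma pderiv_comm (i j : σ') (p : PolyA m) :
    pderiv i (pderiv j p) = pderiv j (pderiv i p) := by
  by_cases h : i = j
  · subst h; rfl
  · ext s
    rw [coeff_pderiv, coeff_pderiv, coeff_pderiv, coeff_pderiv]
    have h1 : ((s + Finsupp.single i 1 : (Fin m ⊕ Fin m) →₀ ℕ)) j = s j := by
      simp [Finsupp.single_apply, h]
    have h2 : ((s + Finsupp.single j 1 : (Fin m ⊕ Fin m) →₀ ℕ)) i = s i := by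
      simp [Finsupp.single_apply, Ne.symm h]
    rw [h1, h2, add_right_comm]
    ring

end helpers

section phi
variable {m : ℕ}

noncomputable def Phi (m : ℕ) : PolyA m →ₗ[ℂ] Derivation ℂ (PolyA m) (PolyA m) :=
  ∑ i : Fin m,
    ((pderiv (inr i) : Derivation ℂ (PolyA m) (PolyA m)).toLinearMap.smulRight
        (pderiv (inl i) : Derivation ℂ (PolyA m) (PolyA m))
      - (pderiv (inl i) : Derivation ℂ (PolyA m) (PolyA m)).toLinearMap.smulRight
        (pderiv (inr i) : Derivation ℂ (PolyA m) (PolyA m)))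

lemma Phi_def (H : PolyA m) : Phi m H = ∑ i : Fin m,
    ((pderiv (inr i) H) • (pderiv (inl i) : Derivation ℂ (PolyA m) (PolyA m))
      - (pderiv (inl i) H) • (pderiv (inr i) : Derivation ℂ (PolyA m) (PolyA m))) := by
  rw [Phi, LinearMap.sum_apply]
  refine Finset.sum_congr rfl fun i _ => ?_
  rw [LinearMap.sub_apply, LinearMap.smulRight_apply, LinearMap.smulRight_apply]
  rfl

lemma Phi_apply (H p : PolyA m) :
    Phi m H p = ∑ i : Fin m,
      (pderiv (inr i) H * pderiv (inl i) p - pderiv (inl i) H * pderiv (inr i) p) := by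
  rw [Phi_def, deriv_sum_apply]
  refine Finset.sum_congr rfl fun i _ => ?_
  simp [Derivation.sub_apply, Derivation.smul_apply, smul_eq_mul]

lemma Phi_apply_inl (H : PolyA m) (k : Fin m) :
    Phi m H (X (inl k)) = pderiv (inr k) H := by
  rw [Phi_apply]
  rw [Finset.sum_eq_single k]
  · simp
  · intro i _ hik
    simp [pderiv_X_of_ne (show (inl k : Fin m ⊕ Fin m) ≠ inl i by simp [hik.symm]),
      pderiv_X_of_ne (show (inl k : Fin m ⊕ Fin m) ≠ inr i by simp)]
  · simp

lemma Phi_apply_inr (H : PolyA m) (k : Fin m) :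
    Phi m H (X (inr k)) = - pderiv (inl k) H := by
  rw [Phi_apply]
  rw [Finset.sum_eq_single k]
  · simp
  · intro i _ hik
    simp [pderiv_X_of_ne (show (inr k : Fin m ⊕ Fin m) ≠ inr i by simp [hik.symm]),
      pderiv_X_of_ne (show (inr k : Fin m ⊕ Fin m) ≠ inl i by simp)]
  · simp

lemma Phi_eq_zero_iff {G : PolyA m} (h0 : constantCoeff G = 0) (hG : Phi m G = 0) :
    G = 0 := by
  refine eq_zero_of_pderiv_eq_zero h0 fun j => ?_
  rcases j with k | k
  · have := Phi_apply_inr G k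
    rw [hG] at this
    simpa using this.symm
  · have := Phi_apply_inl G k
    rw [hG] at this
    simpa using this.symm

end phi

-- XH_eq
lemma XH_eq (r : Fin m ⊕ Fin m →₀ ℕ) : XH r = Phi m (monomial r 1) := by
  rw [XH, Phi_def]
  refine Finset.sum_congr rfl fun i _ => ?_
  congr 1
  · rw [← smul_assoc, pderiv_monomial, xpow]
    congr 1
    rw [smul_monomial, one_mul, smul_eq_mul, mul_one]
  · rw [← smul_assoc, pderiv_monomial, xpow]
    congr 1
    rw [smul_monomial, one_mul, smul_eq_mul, mul_one]

lemma xd_apply (a b : Fin m ⊕ Fin m) (p : PolyA m) :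
    xd a b p = X a * pderiv b p := rfl



lemma brkt_inl (i : Fin m) (b : Fin m ⊕ Fin m) (H : PolyA m) :
    ⁅xd (inl i) b, Phi m H⁆ = Phi m ((X (inl i) : PolyA m) * pderiv b H)
      + ((pderiv b H) • (pderiv (inr i) : Derivation ℂ (PolyA m) (PolyA m))
        - (pderiv (inr i) H) • (pderiv b : Derivation ℂ (PolyA m) (PolyA m))) := by
  apply derivation_ext
  intro c
  rw [Derivation.commutator_apply, Derivation.add_apply, Derivation.sub_apply,
    Derivation.smul_apply, Derivation.smul_apply]
  rcases c with k | k
  · rw [Phi_apply_inl, Phi_apply_inl, xd_apply, xd_apply]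
    by_cases hb : (inl k : Fin m ⊕ Fin m) = b
    · subst hb
      rw [pderiv_X_self, mul_one, Phi_apply_inl, pderiv_mul,
        pderiv_X_of_ne (by simp : (inl i : Fin m ⊕ Fin m) ≠ inr k),
        pderiv_X_of_ne (by simp : (inl k : Fin m ⊕ Fin m) ≠ inr i),
        pderiv_comm (inr k) (inl k)]
      simp only [smul_eq_mul, zero_mul, zero_add, mul_zero, mul_one]
      ring
    · rw [pderiv_X_of_ne hb, mul_zero, map_zero, pderiv_mul,
        pderiv_X_of_ne (by simp : (inl i : Fin m ⊕ Fin m) ≠ inr k),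
        pderiv_comm (inr k) b]
      simp
  · rw [Phi_apply_inr, Phi_apply_inr, xd_apply, xd_apply]
    by_cases hb : (inr k : Fin m ⊕ Fin m) = b
    · subst hb
      rw [pderiv_X_self, mul_one, Phi_apply_inl, pderiv_mul,
        pderiv_comm (inl k) (inr k)]
      by_cases hik : i = k
      · subst hik
        rw [pderiv_X_self, pderiv_X_self]
        simp only [smul_eq_mul, one_mul, mul_one, map_neg, mul_neg, neg_mul]
        ring
      · rw [pderiv_X_of_ne (by simp [hik] : (inl i : Fin m ⊕ Fin m) ≠ inl k),
          pderiv_X_of_ne (by simp [Ne.symm hik] : (inr k : Fin m ⊕ Fin m) ≠ inr i)]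
        simp only [smul_eq_mul, zero_mul, zero_add, mul_zero, mul_one, map_neg, mul_neg, neg_mul]
        ring
    · rw [pderiv_X_of_ne hb, mul_zero, map_zero, pderiv_mul, pderiv_comm (inl k) b]
      by_cases hik : i = k
      · subst hik
        rw [pderiv_X_self, pderiv_X_self]
        simp only [smul_eq_mul, one_mul, mul_one, mul_zero, map_neg, mul_neg, neg_mul, smul_zero]
        ring
      · rw [pderiv_X_of_ne (by simp [hik] : (inl i : Fin m ⊕ Fin m) ≠ inl k),
          pderiv_X_of_ne (by simp [Ne.symm hik] : (inr k : Fin m ⊕ Fin m) ≠ inr i)]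
        simp only [smul_eq_mul, zero_mul, zero_add, mul_zero, map_neg, mul_neg, neg_mul, smul_zero]
        ring


lemma brkt_inr (i : Fin m) (b : Fin m ⊕ Fin m) (H : PolyA m) :
    ⁅xd (inr i) b, Phi m H⁆ = Phi m ((X (inr i) : PolyA m) * pderiv b H)
      - ((pderiv b H) • (pderiv (inl i) : Derivation ℂ (PolyA m) (PolyA m))
        - (pderiv (inl i) H) • (pderiv b : Derivation ℂ (PolyA m) (PolyA m))) := by
  apply derivation_ext
  intro c
  rw [Derivation.commutator_apply, Derivation.sub_apply, Derivation.sub_apply,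
    Derivation.smul_apply, Derivation.smul_apply]
  rcases c with k | k
  · rw [Phi_apply_inl, Phi_apply_inl, xd_apply, xd_apply]
    by_cases hb : (inl k : Fin m ⊕ Fin m) = b
    · subst hb
      rw [pderiv_X_self, mul_one, Phi_apply_inr, pderiv_mul,
        pderiv_comm (inr k) (inl k)]
      by_cases hik : i = k
      · subst hik
        rw [pderiv_X_self, pderiv_X_self]
        simp only [smul_eq_mul, one_mul, mul_one, map_neg, mul_neg, neg_mul]
        ring
      · rw [pderiv_X_of_ne (by simp [hik] : (inr i : Fin m ⊕ Fin m) ≠ inr k),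
          pderiv_X_of_ne (by simp [Ne.symm hik] : (inl k : Fin m ⊕ Fin m) ≠ inl i)]
        simp only [smul_eq_mul, zero_mul, zero_add, mul_zero, mul_one, map_neg, mul_neg, neg_mul]
        ring
    · rw [pderiv_X_of_ne hb, mul_zero, map_zero, pderiv_mul, pderiv_comm (inr k) b]
      by_cases hik : i = k
      · subst hik
        rw [pderiv_X_self, pderiv_X_self]
        simp only [smul_eq_mul, one_mul, mul_one, mul_zero, smul_zero]
        ring
      · rw [pderiv_X_of_ne (by simp [hik] : (inr i : Fin m ⊕ Fin m) ≠ inr k),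
          pderiv_X_of_ne (by simp [Ne.symm hik] : (inl k : Fin m ⊕ Fin m) ≠ inl i)]
        simp only [smul_eq_mul, zero_mul, zero_add, mul_zero, smul_zero]
        ring
  · rw [Phi_apply_inr, Phi_apply_inr, xd_apply, xd_apply]
    by_cases hb : (inr k : Fin m ⊕ Fin m) = b
    · subst hb
      rw [pderiv_X_self, mul_one, Phi_apply_inr, pderiv_mul,
        pderiv_X_of_ne (by simp : (inr i : Fin m ⊕ Fin m) ≠ inl k),
        pderiv_X_of_ne (by simp : (inr k : Fin m ⊕ Fin m) ≠ inl i),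
        pderiv_comm (inl k) (inr k)]
      simp only [smul_eq_mul, zero_mul, zero_add, mul_zero, mul_one, map_neg, mul_neg, neg_mul]
      ring
    · rw [pderiv_X_of_ne hb, mul_zero, map_zero, pderiv_mul,
        pderiv_X_of_ne (by simp : (inr i : Fin m ⊕ Fin m) ≠ inl k),
        pderiv_comm (inl k) b]
      simp


lemma sub_lie' (D1 D2 u : Derivation ℂ (PolyA m) (PolyA m)) :
    ⁅D1 - D2, u⁆ = ⁅D1, u⁆ - ⁅D2, u⁆ := by
  ext a
  simp only [Derivation.commutator_apply, Derivation.sub_apply, map_sub]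
  abel_nf

lemma add_lie' (D1 D2 u : Derivation ℂ (PolyA m) (PolyA m)) :
    ⁅D1 + D2, u⁆ = ⁅D1, u⁆ + ⁅D2, u⁆ := by
  ext a
  simp only [Derivation.commutator_apply, Derivation.add_apply, map_add]
  abel_nf

lemma brkt_E (i : Fin m) (H : PolyA m) :
    ⁅xd (inl i) (inr i), Phi m H⁆ = Phi m ((X (inl i) : PolyA m) * pderiv (inr i) H) := by
  rw [brkt_inl, sub_self, add_zero]

lemma brkt_A (i j : Fin m) (H : PolyA m) :
    ⁅xd (inl i) (inl j) - xd (inr j) (inr i), Phi m H⁆ =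
      Phi m ((X (inl i) : PolyA m) * pderiv (inl j) H
        - (X (inr j) : PolyA m) * pderiv (inr i) H) := by
  rw [sub_lie', brkt_inl, brkt_inr, map_sub]
  abel1

lemma brkt_B (i j : Fin m) (H : PolyA m) :
    ⁅xd (inl i) (inr j) + xd (inl j) (inr i), Phi m H⁆ =
      Phi m ((X (inl i) : PolyA m) * pderiv (inr j) H
        + (X (inl j) : PolyA m) * pderiv (inr i) H) := by
  rw [add_lie', brkt_inl, brkt_inl, map_add]
  abel1

lemma X_mul_eq_zero {a : Fin m ⊕ Fin m} {p : PolyA m}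
    (h : Phi m ((X a : PolyA m) * p) = 0) : p = 0 := by
  have h0 : constantCoeff ((X a : PolyA m) * p) = 0 := by
    rw [map_mul, constantCoeff_X, zero_mul]
  have hz := Phi_eq_zero_iff h0 h
  exact (mul_eq_zero.mp hz).resolve_left (X_ne_zero a)

lemma Lcomp_eq (n : ℕ) : Lcomp m n = Submodule.map (Phi m)
    (Submodule.span ℂ {p : PolyA m |
      ∃ r : Fin m ⊕ Fin m →₀ ℕ, (∑ j, r j) = n + 2 ∧ p = monomial r 1}) := by
  rw [Submodule.map_span, Lcomp]
  congr 1
  ext d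
  constructor
  · rintro ⟨r, hr, rfl⟩
    exact ⟨monomial r 1, ⟨r, hr, rfl⟩, (XH_eq r).symm⟩
  · rintro ⟨p, ⟨r, hr, rfl⟩, rfl⟩
    exact ⟨r, hr, (XH_eq r).symm⟩

lemma deg_of_mem {n : ℕ} {p : PolyA m}
    (hp : p ∈ Submodule.span ℂ {p : PolyA m |
      ∃ r : Fin m ⊕ Fin m →₀ ℕ, (∑ j, r j) = n + 2 ∧ p = monomial r 1}) :
    ∀ a, coeff a p ≠ 0 → (∑ j, a j) = n + 2 := by
  induction hp using Submodule.span_induction with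
  | mem x h =>
    obtain ⟨r, hr, rfl⟩ := h
    intro a ha
    rw [coeff_monomial] at ha
    by_cases hra : r = a
    · subst hra; exact hr
    · simp [hra] at ha
  | zero => simp
  | add x y _ _ hx hy =>
    intro a ha
    by_cases hax : coeff a x = 0
    · exact hy a (by simpa [hax] using ha)
    · exact hx a hax
  | smul c x _ hx =>
    intro a ha
    exact hx a (by intro h; rw [coeff_smul, h, smul_zero] at ha; exact ha rfl)

lemma key_poly {n : ℕ} (hm : 0 < m) {H : PolyA m}
    (hdeg : ∀ a, coeff a H ≠ 0 → (∑ j, a j) = n + 2)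
    (h1 : ∀ i, pderiv (inr i) H = 0)
    (h2 : ∀ j, j ≠ (⟨0, hm⟩ : Fin m) → pderiv (inl j) H = 0) :
    H = coeff (Finsupp.single (inl (⟨0, hm⟩ : Fin m)) (n + 2)) H •
      (monomial (Finsupp.single (inl (⟨0, hm⟩ : Fin m)) (n + 2)) (1 : ℂ)) := by
  set z : Fin m := ⟨0, hm⟩ with hz
  have hcz : ∀ (b : Fin m ⊕ Fin m), b ≠ inl z → ∀ a : Fin m ⊕ Fin m →₀ ℕ,
      a b ≠ 0 → coeff a H = 0 := by
    intro b hb a hab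
    have hpd : pderiv b H = 0 := by
      rcases b with j | i
      · exact h2 j (fun h => hb (by rw [h]))
      · exact h1 i
    exact coeff_eq_zero_of_pderiv hpd hab
  ext a
  rw [coeff_smul, coeff_monomial]
  by_cases ha : Finsupp.single (inl z) (n + 2) = a
  · rw [if_pos ha, smul_eq_mul, mul_one, ha]
  · rw [if_neg ha, smul_eq_mul, mul_zero]
    by_contra hca
    have hsup : ∀ b, b ≠ inl z → a b = 0 := by
      intro b hb
      by_contra h
      exact hca (hcz b hb a h)
    have hone : a = Finsupp.single (inl z) (a (inl z)) := by
      ext b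
      by_cases hb : b = inl z
      · subst hb; simp [Finsupp.single_apply]
      · rw [hsup b hb, Finsupp.single_apply, if_neg (fun h => hb h.symm)]
    have hsum : (∑ j, a j) = a (inl z) :=
      Finset.sum_eq_single (inl z) (fun b _ hb => hsup b hb) (by simp)
    apply ha
    rw [hone, ← hdeg a hca, hsum]

lemma sum_single (b : Fin m ⊕ Fin m) (k : ℕ) :
    (∑ j, (Finsupp.single b k) j) = k := by
  rw [Finset.sum_eq_single b]
  · simp
  · intro c _ hc
    exact Finsupp.single_eq_of_ne (fun h => hc h)
  · simp

/-- In the `𝔰𝔭_N`-module `L_n` (`n ≥ 1`) under the adjoint action of `L₀`, the element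
`X((n+2)e₁) = −x₁^{n+2} ∂/∂x_{m+1}` is, up to scalar, the unique weight vector (for the Cartan
subalgebra spanned by the `x_i∂/∂x_i − x_{m+i}∂/∂x_{m+i}`) annihilated by all raising
operators, i.e. the unique highest weight vector of `L_n`. -/
theorem stmt9 {m : ℕ} (hm : 0 < m) (n : ℕ) (hn : 1 ≤ n) :
    (XH (Finsupp.single (inl ⟨0, hm⟩) (n + 2)) ∈ Lcomp m n ∧
      RaisingAnn (XH (Finsupp.single (inl ⟨0, hm⟩) (n + 2))) ∧
      XH (Finsupp.single (inl (⟨0, hm⟩ : Fin m)) (n + 2)) ≠ 0) ∧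
    ∀ u ∈ Lcomp m n,
      (∃ μ : Fin m → ℂ, ∀ i : Fin m, ⁅xd (inl i) (inl i) - xd (inr i) (inr i), u⁆ = μ i • u) →
      RaisingAnn u →
      ∃ c : ℂ, u = c • XH (Finsupp.single (inl ⟨0, hm⟩) (n + 2)) := by
  have hsr : (∑ j, (Finsupp.single (inl (⟨0, hm⟩ : Fin m)) (n + 2)) j) = n + 2 :=
    sum_single _ _
  have hmono1 : ∀ i : Fin m,
      pderiv (inr i) ((monomial (Finsupp.single (inl (⟨0, hm⟩ : Fin m)) (n + 2)) 1 : PolyA m))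
        = 0 := by
    intro i
    rw [pderiv_monomial]
    rw [show (Finsupp.single (inl (⟨0, hm⟩ : Fin m)) (n + 2)) (inr i) = 0 from
      Finsupp.single_eq_of_ne (by simp)]
    simp
  have hmono2 : ∀ j : Fin m, j ≠ ⟨0, hm⟩ →
      pderiv (inl j) ((monomial (Finsupp.single (inl (⟨0, hm⟩ : Fin m)) (n + 2)) 1 : PolyA m))
        = 0 := by
    intro j hj
    rw [pderiv_monomial]
    rw [show (Finsupp.single (inl (⟨0, hm⟩ : Fin m)) (n + 2)) (inl j) = 0 from
      Finsupp.single_eq_of_ne (by simpa using hj)]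
    simp
  constructor
  · refine ⟨Submodule.subset_span ⟨_, hsr, rfl⟩, ?_, ?_⟩
    · rw [XH_eq]
      constructor
      · intro i
        rw [brkt_E, hmono1 i, mul_zero, map_zero]
      · intro i j hij
        have hjz : j ≠ ⟨0, hm⟩ := by
          intro h
          rw [h] at hij
          exact Nat.not_lt_zero i.val hij
        constructor
        · rw [brkt_A, hmono2 j hjz, hmono1 i, mul_zero, mul_zero, sub_zero, map_zero]
        · rw [brkt_B, hmono1 j, hmono1 i, mul_zero, mul_zero, add_zero, map_zero]
    · intro h0
      have happ := congrArg
        (fun D : Derivation ℂ (PolyA m) (PolyA m) => D (X (inr (⟨0, hm⟩ : Fin m)))) h0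
      simp only [Derivation.zero_apply] at happ
      rw [XH_eq, Phi_apply_inr, pderiv_monomial,
        show (Finsupp.single (inl (⟨0, hm⟩ : Fin m)) (n + 2)) (inl (⟨0, hm⟩ : Fin m)) = n + 2
          from Finsupp.single_eq_same,
        neg_eq_zero, monomial_eq_zero] at happ
      rw [one_mul] at happ
      exact absurd (by exact_mod_cast happ : n + 2 = 0) (by omega)
  · intro u hu hwt hra
    rw [Lcomp_eq] at hu
    obtain ⟨H, hH, rfl⟩ := hu
    have h1 : ∀ i : Fin m, pderiv (inr i) H = 0 := by
      intro i
      have hE := hra.1 i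
      rw [brkt_E] at hE
      exact X_mul_eq_zero hE
    have h2 : ∀ j : Fin m, j ≠ (⟨0, hm⟩ : Fin m) → pderiv (inl j) H = 0 := by
      intro j hj
      have hzj : (⟨0, hm⟩ : Fin m) < j := by
        rw [Fin.lt_def]
        exact Nat.pos_of_ne_zero (fun h => hj (Fin.ext h))
      have hA := (hra.2 ⟨0, hm⟩ j hzj).1
      rw [brkt_A, h1 ⟨0, hm⟩, mul_zero, sub_zero] at hA
      exact X_mul_eq_zero hA
    have hkey := key_poly (n := n) hm (deg_of_mem hH) h1 h2
    refine ⟨coeff (Finsupp.single (inl (⟨0, hm⟩ : Fin m)) (n + 2)) H, ?_⟩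
    rw [XH_eq, ← map_smul]
    exact congrArg (Phi m) hkey
end

section
/- Let V be a finite dimensional module over 𝔥_N⁺ = ⊕_{k≥0} L_k, the positive part of the polynomial Hamiltonian Lie algebra, N = 2m ≥ 2. Then there exists k₀ such that L_k acts trivially on V for all k ≥ k₀. -/
open Sum

attribute [local instance 100] LieRing.ofAssociativeRing

lemma aux_finite_eig {V : Type*} [AddCommGroup V] [Module ℂ V] [FiniteDimensional ℂ V]
    (H : Module.End ℂ V) (v : ℕ → Module.End ℂ V) (c : ℕ → ℂ) (hc : Function.Injective c)
    (hv : ∀ p, ⁅H, v p⁆ = c p • v p) : ∃ p, v p = 0 := by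
  by_contra h
  push_neg at h
  have hli : LinearIndependent ℂ v := by
    refine Module.End.eigenvectors_linearIndependent' (LieAlgebra.ad ℂ (Module.End ℂ V) H)
      c hc v (fun p => ⟨?_, h p⟩)
    rw [Module.End.mem_eigenspace_iff, LieAlgebra.ad_apply, hv]
  have : Finite ℕ := hli.finite_of_isNoetherian
  exact (instInfiniteNat).not_finite this

set_option maxHeartbeats 1000000 in
/-- Let `V` be a finite dimensional module over `𝔥_N⁺ = ⊕_{k≥0} L_k`, the positive part of
the polynomial Hamiltonian Lie algebra (`N = 2m ≥ 2`), presented abstractly as a Lie algebra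
`g` spanned by elements `Xg r`, `r ∈ ℤ_{≥0}^N` with `|r| > 1`, satisfying the Hamiltonian
bracket relations.  Then there exists `k₀` such that `L_k` acts trivially on `V` for all
`k ≥ k₀`, i.e. all `X(r)` with `|r| ≥ k₀ + 2` act by zero. -/
theorem stmt16 {m : ℕ} (hm : 0 < m) {g : Type*} [LieRing g] [LieAlgebra ℂ g]
    (Xg : (Fin m ⊕ Fin m → ℕ) → g)
    (hXg : ∀ j k : Fin m ⊕ Fin m → ℕ, 1 < ∑ a, j a → 1 < ∑ a, k a →
      ⁅Xg j, Xg k⁆ = ∑ i : Fin m,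
        (((j (inr i) * k (inl i) : ℕ) : ℤ) - ((j (inl i) * k (inr i) : ℕ) : ℤ)) •
          Xg (j + k - (Pi.single (inl i) 1 + Pi.single (inr i) 1)))
    (hspan : ⊤ = Submodule.span ℂ (Xg '' {r | 1 < ∑ a, r a}))
    {V : Type*} [AddCommGroup V] [Module ℂ V] [FiniteDimensional ℂ V]
    (ρ : g →ₗ⁅ℂ⁆ Module.End ℂ V) :
    ∃ k₀ : ℕ, ∀ r : Fin m ⊕ Fin m → ℕ, k₀ + 2 ≤ ∑ a, r a → ρ (Xg r) = 0 := by
  classical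
  -- Step 1: in each coordinate direction, some monomial acts by zero.
  have hex : ∀ d : Fin m ⊕ Fin m, ∃ p, 2 ≤ p ∧ ρ (Xg (Pi.single d p)) = 0 := by
    intro d
    -- the Cartan-like element for index i
    obtain i | i := d
    · -- eigenvalue +n for Pi.single (inl i) n
      have hb : ∀ n : ℕ, 2 ≤ n →
          ⁅Xg (Pi.single (inl i) 1 + Pi.single (inr i) 1), Xg (Pi.single (inl i) n)⁆
            = ((n : ℤ)) • Xg (Pi.single (inl i) n) := by
        intro n hn
        rw [hXg]
        · rw [Finset.sum_eq_single_of_mem i (Finset.mem_univ i)]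
          · have harg : ((Pi.single (inl i) 1 + Pi.single (inr i) 1) + Pi.single (inl i) n
                - (Pi.single (inl i) 1 + Pi.single (inr i) 1) : Fin m ⊕ Fin m → ℕ)
                = Pi.single (inl i) n := by
              funext x
              simp only [Pi.add_apply, Pi.sub_apply, Pi.single_apply]
              split_ifs <;> simp_all
            rw [harg]
            simp [Pi.single_apply]
          · intro j _ hj
            have h1 : ((Pi.single (inl i) 1 + Pi.single (inr i) 1) : Fin m ⊕ Fin m → ℕ)
                (inr j) = 0 := by simp [Pi.single_apply, hj]
            have h2 : ((Pi.single (inl i) 1 + Pi.single (inr i) 1) : Fin m ⊕ Fin m → ℕ)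
                (inl j) = 0 := by simp [Pi.single_apply, hj]
            rw [h1, h2]; simp
        · simp [Finset.sum_add_distrib, Finset.sum_pi_single']
        · simp [Finset.sum_pi_single']; omega
      obtain ⟨p, hp⟩ := aux_finite_eig (ρ (Xg (Pi.single (inl i) 1 + Pi.single (inr i) 1)))
        (fun p => ρ (Xg (Pi.single (inl i) (p + 2)))) (fun p => ((p + 2 : ℕ) : ℂ))
        (fun a b hab => by
          simpa using Nat.cast_injective (R := ℂ) hab)
        (fun p => by
          have hz : ρ (((p + 2 : ℕ) : ℤ) • Xg (Pi.single (inl i) (p + 2)))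
              = ((p + 2 : ℕ) : ℤ) • ρ (Xg (Pi.single (inl i) (p + 2))) := by
            exact map_zsmul ρ.toLinearMap _ _
          rw [← LieHom.map_lie, hb (p + 2) (by omega), hz, ← Int.cast_smul_eq_zsmul ℂ]
          norm_num)
      exact ⟨p + 2, by omega, hp⟩
    · -- eigenvalue -n for Pi.single (inr i) n
      have hb : ∀ n : ℕ, 2 ≤ n →
          ⁅Xg (Pi.single (inl i) 1 + Pi.single (inr i) 1), Xg (Pi.single (inr i) n)⁆
            = (-(n : ℤ)) • Xg (Pi.single (inr i) n) := by
        intro n hn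
        rw [hXg]
        · rw [Finset.sum_eq_single_of_mem i (Finset.mem_univ i)]
          · have harg : ((Pi.single (inl i) 1 + Pi.single (inr i) 1) + Pi.single (inr i) n
                - (Pi.single (inl i) 1 + Pi.single (inr i) 1) : Fin m ⊕ Fin m → ℕ)
                = Pi.single (inr i) n := by
              funext x
              simp only [Pi.add_apply, Pi.sub_apply, Pi.single_apply]
              split_ifs <;> simp_all
            rw [harg]
            simp [Pi.single_apply]
          · intro j _ hj
            have h1 : ((Pi.single (inl i) 1 + Pi.single (inr i) 1) : Fin m ⊕ Fin m → ℕ)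
                (inr j) = 0 := by simp [Pi.single_apply, hj]
            have h2 : ((Pi.single (inl i) 1 + Pi.single (inr i) 1) : Fin m ⊕ Fin m → ℕ)
                (inl j) = 0 := by simp [Pi.single_apply, hj]
            rw [h1, h2]; simp
        · simp [Finset.sum_add_distrib, Finset.sum_pi_single']
        · simp [Finset.sum_pi_single']; omega
      obtain ⟨p, hp⟩ := aux_finite_eig (ρ (Xg (Pi.single (inl i) 1 + Pi.single (inr i) 1)))
        (fun p => ρ (Xg (Pi.single (inr i) (p + 2)))) (fun p => (-((p + 2 : ℕ) : ℂ)))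
        (fun a b hab => by
          simpa using Nat.cast_injective (R := ℂ) (neg_injective hab))
        (fun p => by
          have hz : ρ ((-((p + 2 : ℕ) : ℤ)) • Xg (Pi.single (inr i) (p + 2)))
              = (-((p + 2 : ℕ) : ℤ)) • ρ (Xg (Pi.single (inr i) (p + 2))) := by
            exact map_zsmul ρ.toLinearMap _ _
          rw [← LieHom.map_lie, hb (p + 2) (by omega), hz, ← Int.cast_smul_eq_zsmul ℂ]
          norm_num)
      exact ⟨p + 2, by omega, hp⟩
  choose p hp2 hp0 using hex
  -- Step 2: main step: if r has a big enough coordinate, then ρ (Xg r) = 0.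
  have hstep : ∀ (r : Fin m ⊕ Fin m → ℕ) (d : Fin m ⊕ Fin m),
      p d ≤ r d + 1 → p d ≤ ∑ x, r x → ρ (Xg r) = 0 := by
    intro r d hrd hrs
    obtain i | i := d
    · set q := p (inl i) with hq
      have hq2 : 2 ≤ q := hp2 (inl i)
      set b : Fin m ⊕ Fin m → ℕ :=
        fun x => r x + (Pi.single (inr i) 1 : Fin m ⊕ Fin m → ℕ) x - (Pi.single (inl i) (q - 1) : Fin m ⊕ Fin m → ℕ) x with hbdef
      have hbsplit : ∀ x, r x + (Pi.single (inr i) 1 : Fin m ⊕ Fin m → ℕ) x = b x + (Pi.single (inl i) (q - 1) : Fin m ⊕ Fin m → ℕ) x := by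
        intro x
        simp only [hbdef, Pi.single_apply]
        split_ifs with h1 h2 <;> simp_all <;> omega
      have hbsum : 1 < ∑ x, b x := by
        have h1 : ∑ x, (r x + (Pi.single (inr i) 1 : Fin m ⊕ Fin m → ℕ) x) = ∑ x, r x + 1 := by
          rw [Finset.sum_add_distrib]
          simp [Finset.sum_pi_single']
        have h2 : ∑ x, (b x + (Pi.single (inl i) (q - 1) : Fin m ⊕ Fin m → ℕ) x) = ∑ x, b x + (q - 1) := by
          rw [Finset.sum_add_distrib]
          simp [Finset.sum_pi_single']
        have h3 : ∑ x, (r x + (Pi.single (inr i) 1 : Fin m ⊕ Fin m → ℕ) x)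
            = ∑ x, (b x + (Pi.single (inl i) (q - 1) : Fin m ⊕ Fin m → ℕ) x) :=
          Finset.sum_congr rfl (fun x _ => hbsplit x)
        rw [h1, h2] at h3
        omega
      have hbr : b (inr i) = r (inr i) + 1 := by
        simp [hbdef, Pi.single_apply]
      have hbrack : ⁅Xg (Pi.single (inl i) q), Xg b⁆
          = ((0 : ℤ) - ((q * b (inr i) : ℕ) : ℤ)) • Xg r := by
        rw [hXg]
        · rw [Finset.sum_eq_single_of_mem i (Finset.mem_univ i)]
          · have harg : (Pi.single (inl i) q + b
                - (Pi.single (inl i) 1 + Pi.single (inr i) 1) : Fin m ⊕ Fin m → ℕ) = r := by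
              clear hbsplit
              funext x
              rcases x with j | j <;> rcases eq_or_ne j i with rfl | hj <;>
                  simp only [hbdef, Pi.add_apply, Pi.sub_apply, Pi.single_apply] <;>
                [skip; rw [if_neg (by simp [hj]), if_neg (by simp [hj]),
                    if_neg (by simp [hj]), if_neg (by simp [hj])];
                  skip; rw [if_neg (by simp [hj]), if_neg (by simp [hj]),
                    if_neg (by simp [hj]), if_neg (by simp [hj])]] <;>
                simp <;> omega
            rw [harg]
            simp [Pi.single_apply]
          · intro j _ hj
            have h1 : (Pi.single (inl i) q : Fin m ⊕ Fin m → ℕ) (inr j) = 0 := by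
              simp [Pi.single_apply]
            have h2 : (Pi.single (inl i) q : Fin m ⊕ Fin m → ℕ) (inl j) = 0 := by
              simp [Pi.single_apply, hj]
            rw [h1, h2]; simp
        · simp [Finset.sum_pi_single']; omega
        · exact hbsum
      have h0 : ((0 : ℤ) - ((q * b (inr i) : ℕ) : ℤ)) • ρ (Xg r) = 0 := by
        have hz : ρ (((0 : ℤ) - ((q * b (inr i) : ℕ) : ℤ)) • Xg r)
            = ((0 : ℤ) - ((q * b (inr i) : ℕ) : ℤ)) • ρ (Xg r) :=
          map_zsmul ρ.toLinearMap _ _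
        rw [← hz, ← hbrack, LieHom.map_lie, hp0 (inl i), zero_lie]
      rw [← Int.cast_smul_eq_zsmul ℂ] at h0
      have hcne : (((0 : ℤ) - ((q * b (inr i) : ℕ) : ℤ) : ℤ) : ℂ) ≠ 0 := by
        have hq0 : q * b (inr i) ≠ 0 := Nat.mul_ne_zero (by omega) (by rw [hbr]; omega)
        rw [Int.cast_ne_zero, zero_sub, neg_ne_zero, Int.natCast_ne_zero]
        exact hq0
      exact (smul_eq_zero.1 h0).resolve_left hcne
    · set q := p (inr i) with hq
      have hq2 : 2 ≤ q := hp2 (inr i)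
      set b : Fin m ⊕ Fin m → ℕ :=
        fun x => r x + (Pi.single (inl i) 1 : Fin m ⊕ Fin m → ℕ) x - (Pi.single (inr i) (q - 1) : Fin m ⊕ Fin m → ℕ) x with hbdef
      have hbsplit : ∀ x, r x + (Pi.single (inl i) 1 : Fin m ⊕ Fin m → ℕ) x = b x + (Pi.single (inr i) (q - 1) : Fin m ⊕ Fin m → ℕ) x := by
        intro x
        simp only [hbdef, Pi.single_apply]
        split_ifs with h1 h2 <;> simp_all <;> omega
      have hbsum : 1 < ∑ x, b x := by
        have h1 : ∑ x, (r x + (Pi.single (inl i) 1 : Fin m ⊕ Fin m → ℕ) x) = ∑ x, r x + 1 := by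
          rw [Finset.sum_add_distrib]
          simp [Finset.sum_pi_single']
        have h2 : ∑ x, (b x + (Pi.single (inr i) (q - 1) : Fin m ⊕ Fin m → ℕ) x) = ∑ x, b x + (q - 1) := by
          rw [Finset.sum_add_distrib]
          simp [Finset.sum_pi_single']
        have h3 : ∑ x, (r x + (Pi.single (inl i) 1 : Fin m ⊕ Fin m → ℕ) x)
            = ∑ x, (b x + (Pi.single (inr i) (q - 1) : Fin m ⊕ Fin m → ℕ) x) :=
          Finset.sum_congr rfl (fun x _ => hbsplit x)
        rw [h1, h2] at h3
        omega
      have hbr : b (inl i) = r (inl i) + 1 := by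
        simp [hbdef, Pi.single_apply]
      have hbrack : ⁅Xg (Pi.single (inr i) q), Xg b⁆
          = (((q * b (inl i) : ℕ) : ℤ) - (0 : ℤ)) • Xg r := by
        rw [hXg]
        · rw [Finset.sum_eq_single_of_mem i (Finset.mem_univ i)]
          · have harg : (Pi.single (inr i) q + b
                - (Pi.single (inl i) 1 + Pi.single (inr i) 1) : Fin m ⊕ Fin m → ℕ) = r := by
              clear hbsplit
              funext x
              rcases x with j | j <;> rcases eq_or_ne j i with rfl | hj <;>
                  simp only [hbdef, Pi.add_apply, Pi.sub_apply, Pi.single_apply] <;>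
                [skip; rw [if_neg (by simp [hj]), if_neg (by simp [hj]),
                    if_neg (by simp [hj]), if_neg (by simp [hj])];
                  skip; rw [if_neg (by simp [hj]), if_neg (by simp [hj]),
                    if_neg (by simp [hj]), if_neg (by simp [hj])]] <;>
                simp <;> omega
            rw [harg]
            simp [Pi.single_apply]
          · intro j _ hj
            have h1 : (Pi.single (inr i) q : Fin m ⊕ Fin m → ℕ) (inr j) = 0 := by
              simp [Pi.single_apply, hj]
            have h2 : (Pi.single (inr i) q : Fin m ⊕ Fin m → ℕ) (inl j) = 0 := by
              simp [Pi.single_apply]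
            rw [h1, h2]; simp
        · simp [Finset.sum_pi_single']; omega
        · exact hbsum
      have h0 : (((q * b (inl i) : ℕ) : ℤ) - (0 : ℤ)) • ρ (Xg r) = 0 := by
        have hz : ρ ((((q * b (inl i) : ℕ) : ℤ) - (0 : ℤ)) • Xg r)
            = (((q * b (inl i) : ℕ) : ℤ) - (0 : ℤ)) • ρ (Xg r) :=
          map_zsmul ρ.toLinearMap _ _
        rw [← hz, ← hbrack, LieHom.map_lie, hp0 (inr i), zero_lie]
      rw [← Int.cast_smul_eq_zsmul ℂ] at h0
      have hcne : ((((q * b (inl i) : ℕ) : ℤ) - (0 : ℤ) : ℤ) : ℂ) ≠ 0 := by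
        have hq0 : q * b (inl i) ≠ 0 := Nat.mul_ne_zero (by omega) (by rw [hbr]; omega)
        rw [Int.cast_ne_zero, sub_zero, Int.natCast_ne_zero]
        exact hq0
      exact (smul_eq_zero.1 h0).resolve_left hcne
  -- Step 3: pigeonhole
  set P : ℕ := Finset.univ.sup p with hP
  refine ⟨2 * m * P, fun r hr => ?_⟩
  have hcard : (Finset.univ : Finset (Fin m ⊕ Fin m)).card = 2 * m := by
    rw [Finset.card_univ, Fintype.card_sum, Fintype.card_fin]; ring
  have hbig : ∃ d, P ≤ r d := by
    by_contra hcon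
    push_neg at hcon
    have : ∑ x, r x ≤ ∑ _x : Fin m ⊕ Fin m, (P - 1) :=
      Finset.sum_le_sum (fun x _ => by have := hcon x; omega)
    rw [Finset.sum_const, hcard, smul_eq_mul] at this
    have hP1 : 2 ≤ P := le_trans (hp2 (inl ⟨0, hm⟩)) (Finset.le_sup (Finset.mem_univ _))
    have hPP : P - 1 + 1 = P := by omega
    have key : 2 * m * (P - 1) + 2 * m = 2 * m * P := by
      calc 2 * m * (P - 1) + 2 * m = 2 * m * ((P - 1) + 1) := by ring
        _ = 2 * m * P := by rw [hPP]
    have hm2 : 2 ≤ 2 * m := by omega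
    linarith
  obtain ⟨d, hd⟩ := hbig
  have hpd : p d ≤ P := Finset.le_sup (Finset.mem_univ d)
  refine hstep r d (by omega) ?_
  have : P ≤ 2 * m * P := Nat.le_mul_of_pos_left P (by omega)
  omega
end

section
/- Let V be a finite dimensional module for 𝔥_N⁺ ⊕ heis_N with action ρ such that ⊕_{k ≥ k₀} L_k acts trivially on V. Define H(r) = Σ_{k ∈ ℤ_{≥0}^N} (r^k/k!) ρ(P^{(k)}) for r ≠ 0 and H(0) = 0, where P^{(k)} corresponds to X(k) for |k|>1, to pⁱ, qⁱ for k = eᵢ, e_{m+i}, and to c for k = 0. Then the formula h(r)(t^s ⊗ v) = Σ_{i=1}^m (r_{m+i}s_i − r_i s_{m+i}) t^{r+s} ⊗ v + t^{r+s} ⊗ H(r)v, together with d_a(t^s ⊗ v) = (s_a + λ_a) t^s ⊗ v, defines an H_N-module structure on A_N ⊗ V, i.e., all commutator relations [d_a, h(r)] = r_a h(r) and [h(r), h(s)] = Σᵢ (r_{m+i}sᵢ − rᵢs_{m+i}) h(r+s) are satisfied. -/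
open Sum Finset

section
variable {m : ℕ} {V : Type*} [AddCommGroup V] [Module ℂ V]

/-- `H(r) = Σ_{k ∈ ℤ_{≥0}^N} (r^k/k!) P^{(k)}` for `r ≠ 0` and `H(0) = 0`: since
`P^{(k)} = 0` whenever `|k| ≥ k₀`, the sum may be taken over the finitely many `k` with all
components `≤ k₀`. Coordinates `1,…,m` are indexed by `inl i`, `m+1,…,2m` by `inr i`. -/
noncomputable def Hop (k₀ : ℕ) (P : (Fin m ⊕ Fin m → ℕ) → Module.End ℂ V)
    (r : Fin m ⊕ Fin m → ℤ) : Module.End ℂ V :=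
  if r = 0 then 0 else
    ∑ k : Fin m ⊕ Fin m → Fin (k₀ + 1),
      (∏ j, (r j : ℂ) ^ (k j : ℕ) / (Nat.factorial (k j) : ℂ)) • P (fun j => (k j : ℕ))

/-- The action of `d_a` on `A_N ⊗ V`: `d_a (t^s ⊗ v) = (s_a + λ_a) t^s ⊗ v`, with `A_N ⊗ V`
realized as `(ℤ^N) → V`, the component at `s` representing `t^s ⊗ V`. -/
def Dop (lam : Fin m ⊕ Fin m → ℂ) (a : Fin m ⊕ Fin m) :
    Module.End ℂ ((Fin m ⊕ Fin m → ℤ) → V) where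
  toFun f := fun s => ((s a : ℂ) + lam a) • f s
  map_add' f g := by funext s; simp [smul_add]
  map_smul' c f := by funext s; simp [smul_comm c]

/-- The action `h(r)(t^s ⊗ v) = Σᵢ (r_{m+i}sᵢ − rᵢs_{m+i}) t^{r+s} ⊗ v + t^{r+s} ⊗ H(r)v`
on `A_N ⊗ V`, realized as `(ℤ^N) → V`. -/
noncomputable def hop (k₀ : ℕ) (P : (Fin m ⊕ Fin m → ℕ) → Module.End ℂ V)
    (r : Fin m ⊕ Fin m → ℤ) : Module.End ℂ ((Fin m ⊕ Fin m → ℤ) → V) where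
  toFun f := fun s =>
    (∑ i : Fin m, ((r (inr i) * (s - r) (inl i) - r (inl i) * (s - r) (inr i) : ℤ) : ℂ))
        • f (s - r)
      + Hop k₀ P r (f (s - r))
  map_add' f g := by funext s; simp [smul_add]; abel
  map_smul' c f := by funext s; simp [smul_comm c]

end


section aux
variable {m : ℕ} {V : Type*} [AddCommGroup V] [Module ℂ V]

/-- coefficient `r^w / w!` -/
noncomputable def coefC (r : Fin m ⊕ Fin m → ℤ) (w : Fin m ⊕ Fin m → ℕ) : ℂ :=
  ∏ j, (r j : ℂ) ^ (w j) / (Nat.factorial (w j) : ℂ)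

/-- the symplectic-type form -/
noncomputable def omegaC (r s : Fin m ⊕ Fin m → ℤ) : ℂ :=
  ∑ i : Fin m, ((r (inr i) * s (inl i) - r (inl i) * s (inr i) : ℤ) : ℂ)

lemma hop_apply (k₀ : ℕ) (P : (Fin m ⊕ Fin m → ℕ) → Module.End ℂ V)
    (r : Fin m ⊕ Fin m → ℤ) (f : (Fin m ⊕ Fin m → ℤ) → V) (t : Fin m ⊕ Fin m → ℤ) :
    hop k₀ P r f t = omegaC r (t - r) • f (t - r) + Hop k₀ P r (f (t - r)) := rfl

lemma omegaC_zero_left (s : Fin m ⊕ Fin m → ℤ) : omegaC 0 s = 0 := by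
  simp [omegaC]

lemma omegaC_zero_right (r : Fin m ⊕ Fin m → ℤ) : omegaC r 0 = 0 := by
  simp [omegaC]

lemma omegaC_add_right (r a b : Fin m ⊕ Fin m → ℤ) :
    omegaC r (a + b) = omegaC r a + omegaC r b := by
  unfold omegaC
  rw [← Finset.sum_add_distrib]
  apply Finset.sum_congr rfl
  intro i _
  push_cast [Pi.add_apply]
  ring

lemma omegaC_add_left (r a b : Fin m ⊕ Fin m → ℤ) :
    omegaC (r + a) b = omegaC r b + omegaC a b := by
  unfold omegaC
  rw [← Finset.sum_add_distrib]
  apply Finset.sum_congr rfl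
  intro i _
  push_cast [Pi.add_apply]
  ring

lemma omegaC_skew (r s : Fin m ⊕ Fin m → ℤ) : omegaC s r = - omegaC r s := by
  unfold omegaC
  rw [← Finset.sum_neg_distrib]
  apply Finset.sum_congr rfl
  intro i _
  push_cast
  ring

lemma coefC_zero (r : Fin m ⊕ Fin m → ℤ) : coefC r 0 = 1 := by
  simp [coefC]

lemma coefC_single (r : Fin m ⊕ Fin m → ℤ) (a : Fin m ⊕ Fin m) :
    coefC r (Pi.single a 1) = (r a : ℂ) := by
  unfold coefC
  rw [Fintype.prod_eq_single a]
  · simp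
  · intro j hj
    rw [Pi.single_eq_of_ne hj]
    simp

lemma coefC_shift (r : Fin m ⊕ Fin m → ℤ) (w : Fin m ⊕ Fin m → ℕ) (a : Fin m ⊕ Fin m) :
    coefC r (w + Pi.single a 1) * ((w a : ℂ) + 1) = (r a : ℂ) * coefC r w := by
  set W : Fin m ⊕ Fin m → ℕ := w + Pi.single a 1 with hW
  unfold coefC
  rw [← Finset.mul_prod_erase Finset.univ _ (Finset.mem_univ a),
    ← Finset.mul_prod_erase Finset.univ (fun j => (r j : ℂ) ^ (w j) / (Nat.factorial (w j) : ℂ))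
      (Finset.mem_univ a)]
  have hprod : ∏ j ∈ Finset.univ.erase a, (r j : ℂ) ^ (W j) /
      (Nat.factorial (W j) : ℂ)
      = ∏ j ∈ Finset.univ.erase a, (r j : ℂ) ^ (w j) / (Nat.factorial (w j) : ℂ) := by
    apply Finset.prod_congr rfl
    intro j hj
    have : W j = w j := by
      simp [hW, Pi.single_eq_of_ne (Finset.ne_of_mem_erase hj)]
    rw [this]
  rw [hprod]
  have ha : W a = w a + 1 := by simp [hW]
  rw [ha, Nat.factorial_succ]
  have hfac : (Nat.factorial (w a) : ℂ) ≠ 0 := Nat.cast_ne_zero.mpr (Nat.factorial_ne_zero _)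
  have hwa : ((w a : ℂ) + 1) ≠ 0 := by
    have := Nat.cast_add_one_ne_zero (R := ℂ) (w a)
    exact_mod_cast this
  have hfacprod : (∏ x ∈ Finset.univ.erase a, (Nat.factorial (w x) : ℂ)) ≠ 0 :=
    Finset.prod_ne_zero_iff.mpr fun x _ => Nat.cast_ne_zero.mpr (Nat.factorial_ne_zero _)
  rw [Finset.prod_div_distrib]
  push_cast
  field_simp
  ring

end aux

section aux2
variable {m : ℕ} {V : Type*} [AddCommGroup V] [Module ℂ V]

def boxF (m b : ℕ) : Finset (Fin m ⊕ Fin m → ℕ) := Fintype.piFinset fun _ => Finset.range b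

lemma mem_boxF {m b : ℕ} {w : Fin m ⊕ Fin m → ℕ} : w ∈ boxF m b ↔ ∀ a, w a < b := by
  simp [boxF, Fintype.mem_piFinset]

def lowF (m k₀ : ℕ) : Finset (Fin m ⊕ Fin m → ℕ) :=
  (boxF m (k₀ + 1)).filter fun w => ∑ a, w a < k₀

lemma mem_lowF {m k₀ : ℕ} {w : Fin m ⊕ Fin m → ℕ} : w ∈ lowF m k₀ ↔ ∑ a, w a < k₀ := by
  constructor
  · intro h; exact (Finset.mem_filter.mp h).2
  · intro h
    refine Finset.mem_filter.mpr ⟨mem_boxF.mpr fun a => ?_, h⟩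
    have : w a ≤ ∑ b, w b := Finset.single_le_sum (fun _ _ => Nat.zero_le _) (Finset.mem_univ a)
    omega

lemma normalF {k₀ : ℕ} {P : (Fin m ⊕ Fin m → ℕ) → Module.End ℂ V}
    (htriv : ∀ k : Fin m ⊕ Fin m → ℕ, k₀ ≤ ∑ a, k a → P k = 0)
    (A : Finset (Fin m ⊕ Fin m → ℕ)) (hA : ∀ w, (∑ a, w a) < k₀ → w ∈ A)
    (φ : (Fin m ⊕ Fin m → ℕ) → ℂ) :
    ∑ w ∈ A, φ w • P w = ∑ w ∈ lowF m k₀, φ w • P w := by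
  rw [← Finset.sum_filter_add_sum_filter_not A (fun w => ∑ a, w a < k₀) (fun w => φ w • P w)]
  have h2 : ∑ w ∈ A.filter (fun w => ¬ ∑ a, w a < k₀), φ w • P w = 0 := by
    apply Finset.sum_eq_zero
    intro w hw
    rw [htriv w (le_of_not_gt (Finset.mem_filter.mp hw).2), smul_zero]
  rw [h2, add_zero]
  apply Finset.sum_congr
  · ext w
    simp only [Finset.mem_filter, mem_lowF]
    constructor
    · exact fun h => h.2
    · exact fun h => ⟨hA w h, h⟩
  · intros; rfl

lemma Hop_eq_box {k₀ : ℕ} {P : (Fin m ⊕ Fin m → ℕ) → Module.End ℂ V}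
    {r : Fin m ⊕ Fin m → ℤ} (hr : r ≠ 0) :
    Hop k₀ P r = ∑ w ∈ boxF m (k₀ + 1), coefC r w • P w := by
  rw [Hop, if_neg hr]
  apply Finset.sum_nbij' (i := fun k => fun j => ((k j : ℕ) : ℕ))
    (j := fun w => fun j => (⟨w j % (k₀ + 1), Nat.mod_lt _ (Nat.succ_pos _)⟩ : Fin (k₀ + 1)))
  · intro k _
    exact mem_boxF.mpr fun a => (k a).isLt
  · intro w _
    exact Finset.mem_univ _
  · intro k _
    funext j
    apply Fin.ext
    simp [Nat.mod_eq_of_lt (k j).isLt]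
  · intro w hw
    funext j
    simp [Nat.mod_eq_of_lt (mem_boxF.mp hw j)]
  · intro k _
    rfl

lemma Hop_eq_low {k₀ : ℕ} {P : (Fin m ⊕ Fin m → ℕ) → Module.End ℂ V}
    (htriv : ∀ k : Fin m ⊕ Fin m → ℕ, k₀ ≤ ∑ a, k a → P k = 0)
    {r : Fin m ⊕ Fin m → ℤ} (hr : r ≠ 0) :
    Hop k₀ P r = ∑ w ∈ lowF m k₀, coefC r w • P w := by
  rw [Hop_eq_box hr]
  apply normalF htriv
  intro w hw
  exact mem_boxF.mpr fun a => by
    have : w a ≤ ∑ b, w b := Finset.single_le_sum (fun _ _ => Nat.zero_le _) (Finset.mem_univ a)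
    omega

lemma bin1 (x y : ℂ) (n : ℕ) :
    ∑ p ∈ Finset.range (n + 1), x ^ p * y ^ (n - p) /
      ((Nat.factorial p : ℂ) * (Nat.factorial (n - p) : ℂ)) = (x + y) ^ n / (Nat.factorial n : ℂ) := by
  rw [add_pow, Finset.sum_div]
  apply Finset.sum_congr rfl
  intro p hp
  have hpn : p ≤ n := Nat.lt_succ_iff.mp (Finset.mem_range.mp hp)
  have key : (n.choose p : ℂ) * p.factorial * (n - p).factorial = n.factorial := by
    exact_mod_cast congrArg (Nat.cast : ℕ → ℂ) (Nat.choose_mul_factorial_mul_factorial hpn)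
  have h1 : (Nat.factorial p : ℂ) ≠ 0 := Nat.cast_ne_zero.mpr (Nat.factorial_ne_zero _)
  have h2 : (Nat.factorial (n - p) : ℂ) ≠ 0 := Nat.cast_ne_zero.mpr (Nat.factorial_ne_zero _)
  have h3 : (Nat.factorial n : ℂ) ≠ 0 := Nat.cast_ne_zero.mpr (Nat.factorial_ne_zero _)
  field_simp
  rw [← key]
  ring

lemma convolution {m k₀ : ℕ} (r s : Fin m ⊕ Fin m → ℤ) (w : Fin m ⊕ Fin m → ℕ)
    (hw : ∑ a, w a < k₀) :
    ∑ p ∈ ((boxF m (k₀+1) ×ˢ boxF m (k₀+1)).filter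
        (fun p => ∑ a, (p.1 + p.2) a < k₀)).filter (fun p => p.1 + p.2 = w),
      coefC r p.1 * coefC s p.2 = coefC (r + s) w := by
  have hstep : ∑ p ∈ ((boxF m (k₀+1) ×ˢ boxF m (k₀+1)).filter
        (fun p => ∑ a, (p.1 + p.2) a < k₀)).filter (fun p => p.1 + p.2 = w),
      coefC r p.1 * coefC s p.2
      = ∑ j ∈ Fintype.piFinset (fun a => Finset.range (w a + 1)),
        ∏ a, ((r a : ℂ) ^ (j a) * (s a : ℂ) ^ (w a - j a) /
          ((Nat.factorial (j a) : ℂ) * (Nat.factorial (w a - j a) : ℂ))) := by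
    apply Finset.sum_nbij' (i := fun p => p.1) (j := fun j => (j, w - j))
    · intro p hp
      obtain ⟨hp1, hp2⟩ := Finset.mem_filter.mp hp
      refine Fintype.mem_piFinset.mpr fun a => Finset.mem_range.mpr ?_
      have : p.1 a + p.2 a = w a := by
        have := congrFun hp2 a
        simpa using this
      omega
    · intro j hj
      have hle : ∀ a, j a ≤ w a := fun a =>
        Nat.lt_succ_iff.mp (Finset.mem_range.mp (Fintype.mem_piFinset.mp hj a))
      have hsum : j + (w - j) = w := by
        funext a
        have := hle a
        simp only [Pi.add_apply, Pi.sub_apply]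
        omega
      refine Finset.mem_filter.mpr ⟨Finset.mem_filter.mpr ⟨?_, ?_⟩, hsum⟩
      · refine Finset.mem_product.mpr ⟨mem_boxF.mpr fun a => ?_, mem_boxF.mpr fun a => ?_⟩
        · show j a < k₀ + 1
          have : w a ≤ ∑ b, w b := Finset.single_le_sum (fun _ _ => Nat.zero_le _) (Finset.mem_univ a)
          have := hle a; omega
        · show (w - j) a < k₀ + 1
          have : w a ≤ ∑ b, w b := Finset.single_le_sum (fun _ _ => Nat.zero_le _) (Finset.mem_univ a)
          simp only [Pi.sub_apply]; omega
      · rw [hsum]; exact hw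
    · intro p hp
      obtain ⟨hp1, hp2⟩ := Finset.mem_filter.mp hp
      have : p.2 = w - p.1 := by
        funext a
        have := congrFun hp2 a
        simp only [Pi.add_apply] at this
        simp only [Pi.sub_apply]
        omega
      exact Prod.ext rfl this.symm
    · intro j _
      rfl
    · intro p hp
      obtain ⟨hp1, hp2⟩ := Finset.mem_filter.mp hp
      have h2 : p.2 = w - p.1 := by
        funext a
        have := congrFun hp2 a
        simp only [Pi.add_apply] at this
        simp only [Pi.sub_apply]
        omega
      unfold coefC
      rw [← Finset.prod_mul_distrib]
      apply Finset.prod_congr rfl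
      intro a _
      rw [h2]
      simp only [Pi.sub_apply]
      rw [div_mul_div_comm]
  have hprod : ∏ a, (∑ p ∈ Finset.range (w a + 1), ((r a : ℂ) ^ p * (s a : ℂ) ^ (w a - p) /
      ((Nat.factorial p : ℂ) * (Nat.factorial (w a - p) : ℂ)))) = coefC (r + s) w := by
    unfold coefC
    apply Finset.prod_congr rfl
    intro a _
    rw [bin1]
    push_cast [Pi.add_apply]
    rfl
  rw [hstep, ← hprod, Finset.prod_univ_sum]

lemma fullsum {k₀ : ℕ} {P : (Fin m ⊕ Fin m → ℕ) → Module.End ℂ V}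
    (htriv : ∀ k : Fin m ⊕ Fin m → ℕ, k₀ ≤ ∑ a, k a → P k = 0)
    (r s : Fin m ⊕ Fin m → ℤ) :
    ∑ p ∈ boxF m (k₀+1) ×ˢ boxF m (k₀+1), (coefC r p.1 * coefC s p.2) • P (p.1 + p.2)
      = ∑ w ∈ lowF m k₀, coefC (r + s) w • P w := by
  rw [← Finset.sum_filter_add_sum_filter_not (boxF m (k₀+1) ×ˢ boxF m (k₀+1))
    (fun p => ∑ a, (p.1 + p.2) a < k₀) (fun p => (coefC r p.1 * coefC s p.2) • P (p.1 + p.2))]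
  have h2 : ∑ p ∈ (boxF m (k₀+1) ×ˢ boxF m (k₀+1)).filter
      (fun p => ¬ ∑ a, (p.1 + p.2) a < k₀), (coefC r p.1 * coefC s p.2) • P (p.1 + p.2) = 0 := by
    apply Finset.sum_eq_zero
    intro p hp
    rw [htriv _ (le_of_not_gt (Finset.mem_filter.mp hp).2), smul_zero]
  rw [h2, add_zero]
  have hfib := Finset.sum_fiberwise_of_maps_to
    (s := (boxF m (k₀+1) ×ˢ boxF m (k₀+1)).filter (fun p => ∑ a, (p.1 + p.2) a < k₀))
    (t := lowF m k₀) (g := fun p => p.1 + p.2)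
    (fun p hp => mem_lowF.mpr (Finset.mem_filter.mp hp).2)
    (fun p => (coefC r p.1 * coefC s p.2) • P (p.1 + p.2))
  rw [← hfib]
  apply Finset.sum_congr rfl
  intro w hw
  have : ∀ p ∈ ((boxF m (k₀+1) ×ˢ boxF m (k₀+1)).filter
      (fun p => ∑ a, (p.1 + p.2) a < k₀)).filter (fun p => p.1 + p.2 = w),
      (coefC r p.1 * coefC s p.2) • P (p.1 + p.2) = (coefC r p.1 * coefC s p.2) • P w := by
    intro p hp
    rw [(Finset.mem_filter.mp hp).2]
  rw [Finset.sum_congr rfl this, ← Finset.sum_smul, convolution r s w (mem_lowF.mp hw)]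

end aux2

section aux3
variable {m : ℕ} {V : Type*} [AddCommGroup V] [Module ℂ V]

lemma my_sum_lie {α : Type*} (s : Finset α) (f : α → Module.End ℂ V) (x : Module.End ℂ V) :
    ⁅∑ i ∈ s, f i, x⁆ = ∑ i ∈ s, ⁅f i, x⁆ := by
  rw [Ring.lie_def, Finset.sum_mul, Finset.mul_sum, ← Finset.sum_sub_distrib]
  exact Finset.sum_congr rfl fun i _ => (Ring.lie_def _ _).symm

lemma my_lie_sum {α : Type*} (s : Finset α) (f : α → Module.End ℂ V) (x : Module.End ℂ V) :
    ⁅x, ∑ i ∈ s, f i⁆ = ∑ i ∈ s, ⁅x, f i⁆ := by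
  rw [Ring.lie_def, Finset.sum_mul, Finset.mul_sum, ← Finset.sum_sub_distrib]
  exact Finset.sum_congr rfl fun i _ => (Ring.lie_def _ _).symm

lemma sum_single_one {m : ℕ} (x : Fin m ⊕ Fin m) : ∑ a, Pi.single x (1:ℕ) a = 1 := by
  simp [Pi.single_apply]

lemma sum_add_single {m : ℕ} (u : Fin m ⊕ Fin m → ℕ) (x : Fin m ⊕ Fin m) :
    ∑ a, (u + Pi.single x 1 : Fin m ⊕ Fin m → ℕ) a = (∑ a, u a) + 1 := by
  simp only [Pi.add_apply]
  rw [Finset.sum_add_distrib, sum_single_one]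

lemma sum_sub_single {m : ℕ} (u : Fin m ⊕ Fin m → ℕ) (x : Fin m ⊕ Fin m) (hx : u x ≠ 0) :
    ∑ a, (u - Pi.single x 1 : Fin m ⊕ Fin m → ℕ) a = (∑ a, u a) - 1 := by
  have hpt : ∀ a, (u - Pi.single x 1 : Fin m ⊕ Fin m → ℕ) a + (Pi.single x 1 : Fin m ⊕ Fin m → ℕ) a = u a := by
    intro a
    by_cases h : a = x
    · subst h
      simp only [Pi.sub_apply, Pi.single_eq_same]
      omega
    · simp [Pi.single_eq_of_ne h]
  have hsum : ∑ a, ((u - Pi.single x 1 : Fin m ⊕ Fin m → ℕ) a + (Pi.single x 1 : Fin m ⊕ Fin m → ℕ) a)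
      = ∑ a, u a := Finset.sum_congr rfl fun a _ => hpt a
  rw [Finset.sum_add_distrib, sum_single_one] at hsum
  omega

lemma sub_add_single {m : ℕ} (u : Fin m ⊕ Fin m → ℕ) (x : Fin m ⊕ Fin m) (hx : u x ≠ 0) :
    u - Pi.single x 1 + Pi.single x 1 = u := by
  funext a
  by_cases h : a = x
  · subst h
    simp only [Pi.add_apply, Pi.sub_apply, Pi.single_eq_same]
    omega
  · simp [Pi.single_eq_of_ne h]

lemma add_sub_single {m : ℕ} (u : Fin m ⊕ Fin m → ℕ) (x : Fin m ⊕ Fin m) :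
    u + Pi.single x 1 - Pi.single x 1 = u := by
  funext a
  by_cases h : a = x
  · subst h
    simp only [Pi.add_apply, Pi.sub_apply, Pi.single_eq_same]
    omega
  · simp [Pi.single_eq_of_ne h]

lemma index_cancel {m : ℕ} (q1 q2 : Fin m ⊕ Fin m → ℕ) (x y : Fin m ⊕ Fin m) :
    q1 + Pi.single x 1 + (q2 + Pi.single y 1) - (Pi.single x 1 + Pi.single y 1) = q1 + q2 := by
  funext a
  simp only [Pi.add_apply, Pi.sub_apply]
  omega

lemma omegaC_eq {m : ℕ} (r s : Fin m ⊕ Fin m → ℤ) :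
    omegaC r s = ∑ i, ((r (inr i) : ℂ) * (s (inl i) : ℂ) - (r (inl i) : ℂ) * (s (inr i) : ℂ)) := by
  unfold omegaC
  exact Finset.sum_congr rfl fun i _ => by push_cast; ring

lemma omegaC_neg_self {m : ℕ} (r : Fin m ⊕ Fin m → ℤ) : omegaC r (-r) = 0 := by
  unfold omegaC
  rw [Finset.sum_eq_zero]
  intro i _
  push_cast [Pi.neg_apply]
  ring

lemma Hop_all_zero {k₀ : ℕ} {P : (Fin m ⊕ Fin m → ℕ) → Module.End ℂ V}
    (hP0 : ∀ k, P k = 0) (r : Fin m ⊕ Fin m → ℤ) : Hop k₀ P r = 0 := by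
  unfold Hop
  split <;> simp [hP0]

lemma sum_ne_zero_iff {m : ℕ} (u : Fin m ⊕ Fin m → ℕ) : u ≠ 0 ↔ 0 < ∑ a, u a := by
  rw [Nat.pos_iff_ne_zero]
  constructor
  · intro h hs
    apply h
    funext a
    exact (Finset.sum_eq_zero_iff.mp hs) a (Finset.mem_univ a)
  · intro h h0
    apply h
    rw [h0]
    simp

end aux3

section keysec
variable {m : ℕ} {V : Type*} [AddCommGroup V] [Module ℂ V]

lemma Treindex {k₀ : ℕ} {P : (Fin m ⊕ Fin m → ℕ) → Module.End ℂ V}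
    (htriv : ∀ k : Fin m ⊕ Fin m → ℕ, k₀ ≤ ∑ a, k a → P k = 0)
    (r s : Fin m ⊕ Fin m → ℤ) (x y : Fin m ⊕ Fin m) (hxy : x ≠ y) :
    ∑ p ∈ ((boxF m (k₀+1) ×ˢ boxF m (k₀+1)).filter
        (fun p => ¬ ∑ a, p.1 a ≤ 1)).filter (fun p => ¬ ∑ a, p.2 a ≤ 1),
      ((coefC r p.1 * coefC s p.2) * ((p.1 x * p.2 y : ℕ) : ℂ)) •
        P (p.1 + p.2 - (Pi.single x 1 + Pi.single y 1))
    = ((r x : ℂ) * (s y : ℂ)) •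
        ∑ p ∈ (boxF m (k₀+1)).erase 0 ×ˢ (boxF m (k₀+1)).erase 0,
          (coefC r p.1 * coefC s p.2) • P (p.1 + p.2) := by
  set B := boxF m (k₀+1) with hB
  set D := ((B ×ˢ B).filter (fun p => ¬ ∑ a, p.1 a ≤ 1)).filter (fun p => ¬ ∑ a, p.2 a ≤ 1)
    with hD
  -- Step 1: restrict to nonzero coordinates
  have e1 : ∑ p ∈ D.filter (fun p => p.1 x ≠ 0 ∧ p.2 y ≠ 0),
      ((coefC r p.1 * coefC s p.2) * ((p.1 x * p.2 y : ℕ) : ℂ)) •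
        P (p.1 + p.2 - (Pi.single x 1 + Pi.single y 1))
      = ∑ p ∈ D, ((coefC r p.1 * coefC s p.2) * ((p.1 x * p.2 y : ℕ) : ℂ)) •
        P (p.1 + p.2 - (Pi.single x 1 + Pi.single y 1)) := by
    apply Finset.sum_filter_of_ne
    intro p _ hne
    constructor
    · intro h0
      apply hne
      rw [h0, Nat.zero_mul, Nat.cast_zero, mul_zero, zero_smul]
    · intro h0
      apply hne
      rw [h0, Nat.mul_zero, Nat.cast_zero, mul_zero, zero_smul]
  rw [← e1]
  -- Step 2: the bijection
  have e2 : ∑ p ∈ D.filter (fun p => p.1 x ≠ 0 ∧ p.2 y ≠ 0),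
      ((coefC r p.1 * coefC s p.2) * ((p.1 x * p.2 y : ℕ) : ℂ)) •
        P (p.1 + p.2 - (Pi.single x 1 + Pi.single y 1))
      = ∑ q ∈ (B.erase 0 ×ˢ B.erase 0).filter (fun q => q.1 x < k₀ ∧ q.2 y < k₀),
        ((r x : ℂ) * (s y : ℂ) * (coefC r q.1 * coefC s q.2)) • P (q.1 + q.2) := by
    apply Finset.sum_nbij' (i := fun p => (p.1 - Pi.single x 1, p.2 - Pi.single y 1))
      (j := fun q => (q.1 + Pi.single x 1, q.2 + Pi.single y 1))
    · intro p hp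
      have hp' := (Finset.mem_filter.mp hp).1
      have hpx := (Finset.mem_filter.mp hp).2.1
      have hpy := (Finset.mem_filter.mp hp).2.2
      obtain ⟨hp'', hbig2⟩ := Finset.mem_filter.mp hp'
      obtain ⟨hp''', hbig1⟩ := Finset.mem_filter.mp hp''
      obtain ⟨hm1, hm2⟩ := Finset.mem_product.mp hp'''
      refine Finset.mem_filter.mpr ⟨Finset.mem_product.mpr ⟨?_, ?_⟩, ?_, ?_⟩
      · refine Finset.mem_erase.mpr ⟨?_, mem_boxF.mpr fun a => ?_⟩
        · show (p.1 - Pi.single x 1 : Fin m ⊕ Fin m → ℕ) ≠ 0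
          rw [sum_ne_zero_iff, sum_sub_single _ _ hpx]
          have := Nat.lt_of_not_le hbig1
          omega
        · have hle : (p.1 - Pi.single x 1 : Fin m ⊕ Fin m → ℕ) a ≤ p.1 a := by
            simp only [Pi.sub_apply]; omega
          exact lt_of_le_of_lt hle (mem_boxF.mp hm1 a)
      · refine Finset.mem_erase.mpr ⟨?_, mem_boxF.mpr fun a => ?_⟩
        · show (p.2 - Pi.single y 1 : Fin m ⊕ Fin m → ℕ) ≠ 0
          rw [sum_ne_zero_iff, sum_sub_single _ _ hpy]
          have := Nat.lt_of_not_le hbig2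
          omega
        · have hle : (p.2 - Pi.single y 1 : Fin m ⊕ Fin m → ℕ) a ≤ p.2 a := by
            simp only [Pi.sub_apply]; omega
          exact lt_of_le_of_lt hle (mem_boxF.mp hm2 a)
      · have := mem_boxF.mp hm1 x
        simp only [Pi.sub_apply, Pi.single_eq_same]
        omega
      · have := mem_boxF.mp hm2 y
        simp only [Pi.sub_apply, Pi.single_eq_same]
        omega
    · intro q hq
      have hq' := (Finset.mem_filter.mp hq).1
      have hqx := (Finset.mem_filter.mp hq).2.1
      have hqy := (Finset.mem_filter.mp hq).2.2
      obtain ⟨hm1, hm2⟩ := Finset.mem_product.mp hq'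
      obtain ⟨hne1, hb1⟩ := Finset.mem_erase.mp hm1
      obtain ⟨hne2, hb2⟩ := Finset.mem_erase.mp hm2
      refine Finset.mem_filter.mpr ⟨Finset.mem_filter.mpr ⟨Finset.mem_filter.mpr
        ⟨Finset.mem_product.mpr ⟨?_, ?_⟩, ?_⟩, ?_⟩, ?_⟩
      · refine mem_boxF.mpr fun a => ?_
        by_cases h : a = x
        · subst h
          simp only [Pi.add_apply, Pi.single_eq_same]
          have := mem_boxF.mp hb1 a
          have hx' := (Finset.mem_filter.mp hq).2.1
          omega
        · have := mem_boxF.mp hb1 a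
          simpa [Pi.single_eq_of_ne h] using this
      · refine mem_boxF.mpr fun a => ?_
        by_cases h : a = y
        · subst h
          simp only [Pi.add_apply, Pi.single_eq_same]
          have := mem_boxF.mp hb2 a
          have hy' := (Finset.mem_filter.mp hq).2.2
          omega
        · have := mem_boxF.mp hb2 a
          simpa [Pi.single_eq_of_ne h] using this
      · show ¬ ∑ a, (q.1 + Pi.single x 1 : Fin m ⊕ Fin m → ℕ) a ≤ 1
        rw [not_le, sum_add_single]
        have := (sum_ne_zero_iff q.1).mp hne1
        omega
      · show ¬ ∑ a, (q.2 + Pi.single y 1 : Fin m ⊕ Fin m → ℕ) a ≤ 1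
        rw [not_le, sum_add_single]
        have := (sum_ne_zero_iff q.2).mp hne2
        omega
      · constructor
        · show (q.1 + Pi.single x 1 : Fin m ⊕ Fin m → ℕ) x ≠ 0
          simp
        · show (q.2 + Pi.single y 1 : Fin m ⊕ Fin m → ℕ) y ≠ 0
          simp
    · intro p hp
      have hpx : p.1 x ≠ 0 := (Finset.mem_filter.mp hp).2.1
      have hpy : p.2 y ≠ 0 := (Finset.mem_filter.mp hp).2.2
      exact Prod.ext (sub_add_single _ _ hpx) (sub_add_single _ _ hpy)
    · intro q _
      exact Prod.ext (add_sub_single _ _) (add_sub_single _ _)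
    · intro p hp
      have hpx : p.1 x ≠ 0 := (Finset.mem_filter.mp hp).2.1
      have hpy : p.2 y ≠ 0 := (Finset.mem_filter.mp hp).2.2
      have hidx : p.1 + p.2 - (Pi.single x 1 + Pi.single y 1)
          = (p.1 - Pi.single x 1) + (p.2 - Pi.single y 1) := by
        conv_lhs => rw [← sub_add_single p.1 x hpx, ← sub_add_single p.2 y hpy]
        exact index_cancel _ _ _ _
      have hc1 : coefC r p.1 * ((p.1 x : ℕ) : ℂ) = (r x : ℂ) * coefC r (p.1 - Pi.single x 1) := by
        have h1 : p.1 = (p.1 - Pi.single x 1) + Pi.single x 1 := (sub_add_single _ _ hpx).symm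
        have h2 : ((p.1 x : ℕ) : ℂ) = (((p.1 - Pi.single x 1 : Fin m ⊕ Fin m → ℕ) x : ℕ) : ℂ) + 1 := by
          simp only [Pi.sub_apply, Pi.single_eq_same]
          have : p.1 x - 1 + 1 = p.1 x := by omega
          rw [← this]
          push_cast
          ring
        rw [h2]
        nth_rewrite 1 [h1]
        exact coefC_shift r _ x
      have hc2 : coefC s p.2 * ((p.2 y : ℕ) : ℂ) = (s y : ℂ) * coefC s (p.2 - Pi.single y 1) := by
        have h1 : p.2 = (p.2 - Pi.single y 1) + Pi.single y 1 := (sub_add_single _ _ hpy).symm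
        have h2 : ((p.2 y : ℕ) : ℂ) = (((p.2 - Pi.single y 1 : Fin m ⊕ Fin m → ℕ) y : ℕ) : ℂ) + 1 := by
          simp only [Pi.sub_apply, Pi.single_eq_same]
          have : p.2 y - 1 + 1 = p.2 y := by omega
          rw [← this]
          push_cast
          ring
        rw [h2]
        nth_rewrite 1 [h1]
        exact coefC_shift s _ y
      rw [hidx]
      congr 1
      push_cast
      calc coefC r p.1 * coefC s p.2 * ((p.1 x : ℂ) * (p.2 y : ℂ))
          = (coefC r p.1 * ((p.1 x : ℕ) : ℂ)) * (coefC s p.2 * ((p.2 y : ℕ) : ℂ)) := by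
            push_cast; ring
        _ = ((r x : ℂ) * coefC r (p.1 - Pi.single x 1)) *
            ((s y : ℂ) * coefC s (p.2 - Pi.single y 1)) := by rw [hc1, hc2]
        _ = (r x : ℂ) * (s y : ℂ) *
            (coefC r (p.1 - Pi.single x 1) * coefC s (p.2 - Pi.single y 1)) := by ring
  rw [e2]
  -- Step 3: extend to the full product, dropping the coordinate bounds
  have e3 : ∑ q ∈ (B.erase 0 ×ˢ B.erase 0).filter (fun q => q.1 x < k₀ ∧ q.2 y < k₀),
        ((r x : ℂ) * (s y : ℂ) * (coefC r q.1 * coefC s q.2)) • P (q.1 + q.2)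
      = ∑ q ∈ B.erase 0 ×ˢ B.erase 0,
        ((r x : ℂ) * (s y : ℂ) * (coefC r q.1 * coefC s q.2)) • P (q.1 + q.2) := by
    apply Finset.sum_subset (Finset.filter_subset _ _)
    intro q hq hnq
    have hcond : ¬ (q.1 x < k₀ ∧ q.2 y < k₀) := by
      intro hc
      exact hnq (Finset.mem_filter.mpr ⟨hq, hc⟩)
    have hbig : k₀ ≤ ∑ a, (q.1 + q.2) a := by
      have h1 : (q.1 + q.2) x ≤ ∑ a, (q.1 + q.2) a :=
        Finset.single_le_sum (fun _ _ => Nat.zero_le _) (Finset.mem_univ x)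
      have h2 : (q.1 + q.2) y ≤ ∑ a, (q.1 + q.2) a :=
        Finset.single_le_sum (fun _ _ => Nat.zero_le _) (Finset.mem_univ y)
      simp only [Pi.add_apply] at h1 h2 ⊢
      rcases Nat.lt_or_ge (q.1 x) k₀ with h | h
      · rcases Nat.lt_or_ge (q.2 y) k₀ with h' | h'
        · exact absurd ⟨h, h'⟩ hcond
        · omega
      · omega
    rw [htriv _ hbig, smul_zero]
  rw [e3, Finset.smul_sum]
  apply Finset.sum_congr rfl
  intro q _
  rw [smul_smul]

end keysec

section keysec2
variable {m : ℕ} {V : Type*} [AddCommGroup V] [Module ℂ V]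
attribute [local instance] LieRing.ofAssociativeRing

lemma keyH {k₀ : ℕ} {P : (Fin m ⊕ Fin m → ℕ) → Module.End ℂ V}
    (hP1 : ∀ j k : Fin m ⊕ Fin m → ℕ, 1 < ∑ a, j a → 1 < ∑ a, k a →
      ⁅P j, P k⁆ = ∑ i : Fin m,
        (((j (inr i) * k (inl i) : ℕ) : ℤ) - ((j (inl i) * k (inr i) : ℕ) : ℤ)) •
          P (j + k - (Pi.single (inl i) 1 + Pi.single (inr i) 1)))
    (hP2 : ∀ i : Fin m, ⁅P (Pi.single (inl i) 1), P (Pi.single (inr i) 1)⁆ = P 0)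
    (hP2' : ∀ i : Fin m, ⁅P (Pi.single (inr i) 1), P (Pi.single (inl i) 1)⁆ = -(P 0))
    (hP3 : ∀ j k : Fin m ⊕ Fin m → ℕ, (∑ a, j a) ≤ 1 →
      (∀ i : Fin m, ¬(j = Pi.single (inl i) 1 ∧ k = Pi.single (inr i) 1) ∧
        ¬(j = Pi.single (inr i) 1 ∧ k = Pi.single (inl i) 1)) →
      ⁅P j, P k⁆ = 0)
    (htriv : ∀ k : Fin m ⊕ Fin m → ℕ, k₀ ≤ ∑ a, k a → P k = 0)
    (r s : Fin m ⊕ Fin m → ℤ) :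
    ⁅Hop k₀ P r, Hop k₀ P s⁆
      = omegaC r s • (Hop k₀ P (r + s) - Hop k₀ P r - Hop k₀ P s) := by
  by_cases hr : r = 0
  · subst hr
    rw [omegaC_zero_left, zero_smul, show Hop k₀ P 0 = 0 from if_pos rfl, zero_lie]
  by_cases hs : s = 0
  · subst hs
    rw [omegaC_zero_right, zero_smul, show Hop k₀ P 0 = 0 from if_pos rfl, lie_zero]
  rcases Nat.eq_zero_or_pos k₀ with hk0 | hk0
  · subst hk0
    have hP0 : ∀ k, P k = 0 := fun k => htriv k (Nat.zero_le _)
    simp only [Hop_all_zero hP0]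
    simp
  -- main case
  set B := boxF m (k₀+1) with hB
  have hB0 : (0 : Fin m ⊕ Fin m → ℕ) ∈ B := mem_boxF.mpr fun a => Nat.succ_pos _
  -- bilinear expansion of the bracket
  have hexp : ⁅Hop k₀ P r, Hop k₀ P s⁆
      = ∑ p ∈ B ×ˢ B, (coefC r p.1 * coefC s p.2) • ⁅P p.1, P p.2⁆ := by
    rw [Hop_eq_box hr, Hop_eq_box hs, my_sum_lie]
    rw [Finset.sum_product]
    apply Finset.sum_congr rfl
    intro j _
    rw [my_lie_sum]
    apply Finset.sum_congr rfl
    intro k _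
    rw [smul_lie, lie_smul, smul_smul]
  -- partition into three regions
  have hpart : ∑ p ∈ B ×ˢ B, (coefC r p.1 * coefC s p.2) • ⁅P p.1, P p.2⁆
      = ∑ p ∈ (B ×ˢ B).filter (fun p => ∑ a, p.1 a ≤ 1),
          (coefC r p.1 * coefC s p.2) • ⁅P p.1, P p.2⁆
        + ∑ p ∈ ((B ×ˢ B).filter (fun p => ¬ ∑ a, p.1 a ≤ 1)).filter (fun p => ∑ a, p.2 a ≤ 1),
          (coefC r p.1 * coefC s p.2) • ⁅P p.1, P p.2⁆
        + ∑ p ∈ ((B ×ˢ B).filter (fun p => ¬ ∑ a, p.1 a ≤ 1)).filter (fun p => ¬ ∑ a, p.2 a ≤ 1),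
          (coefC r p.1 * coefC s p.2) • ⁅P p.1, P p.2⁆ := by
    rw [add_assoc, Finset.sum_filter_add_sum_filter_not, Finset.sum_filter_add_sum_filter_not]
  -- region 2 vanishes
  have hR2 : ∑ p ∈ ((B ×ˢ B).filter (fun p => ¬ ∑ a, p.1 a ≤ 1)).filter
      (fun p => ∑ a, p.2 a ≤ 1), (coefC r p.1 * coefC s p.2) • ⁅P p.1, P p.2⁆ = 0 := by
    apply Finset.sum_eq_zero
    intro p hp
    have hsm : ∑ a, p.2 a ≤ 1 := (Finset.mem_filter.mp hp).2
    have hbig : ¬ ∑ a, p.1 a ≤ 1 := (Finset.mem_filter.mp (Finset.mem_filter.mp hp).1).2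
    have hbr : ⁅P p.2, P p.1⁆ = 0 := by
      apply hP3 p.2 p.1 hsm
      intro i
      constructor
      · rintro ⟨h1, h2⟩
        apply hbig
        rw [h2, sum_single_one]
      · rintro ⟨h1, h2⟩
        apply hbig
        rw [h2, sum_single_one]
    rw [← lie_skew, hbr, neg_zero, smul_zero]
  -- region 1 gives -ω(r,s) • P 0
  have hR1 : ∑ p ∈ (B ×ˢ B).filter (fun p => ∑ a, p.1 a ≤ 1),
      (coefC r p.1 * coefC s p.2) • ⁅P p.1, P p.2⁆ = (- omegaC r s) • P 0 := by
    classical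
    set SP : Finset ((Fin m ⊕ Fin m → ℕ) × (Fin m ⊕ Fin m → ℕ)) :=
      (Finset.univ.image fun i : Fin m =>
          ((Pi.single (inl i) 1 : Fin m ⊕ Fin m → ℕ), (Pi.single (inr i) 1 : Fin m ⊕ Fin m → ℕ)))
        ∪ (Finset.univ.image fun i : Fin m =>
          ((Pi.single (inr i) 1 : Fin m ⊕ Fin m → ℕ), (Pi.single (inl i) 1 : Fin m ⊕ Fin m → ℕ)))
      with hSP
    have hsingleB : ∀ x : Fin m ⊕ Fin m, (Pi.single x 1 : Fin m ⊕ Fin m → ℕ) ∈ B := by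
      intro x
      refine mem_boxF.mpr fun a => ?_
      by_cases h : a = x
      · subst h; simp only [Pi.single_eq_same]; omega
      · simp only [Pi.single_eq_of_ne h]; omega
    have hsub : SP ⊆ (B ×ˢ B).filter (fun p => ∑ a, p.1 a ≤ 1) := by
      intro p hp
      rcases Finset.mem_union.mp hp with h | h <;>
        obtain ⟨i, _, rfl⟩ := Finset.mem_image.mp h <;>
        exact Finset.mem_filter.mpr ⟨Finset.mem_product.mpr ⟨hsingleB _, hsingleB _⟩,
          le_of_eq (sum_single_one _)⟩
    rw [← Finset.sum_filter_add_sum_filter_not ((B ×ˢ B).filter (fun p => ∑ a, p.1 a ≤ 1))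
      (fun p => p ∈ SP) (fun p => (coefC r p.1 * coefC s p.2) • ⁅P p.1, P p.2⁆)]
    have hzero : ∑ p ∈ ((B ×ˢ B).filter (fun p => ∑ a, p.1 a ≤ 1)).filter (fun p => ¬ p ∈ SP),
        (coefC r p.1 * coefC s p.2) • ⁅P p.1, P p.2⁆ = 0 := by
      apply Finset.sum_eq_zero
      intro p hp
      have hsm : ∑ a, p.1 a ≤ 1 := (Finset.mem_filter.mp (Finset.mem_filter.mp hp).1).2
      have hnsp : ¬ p ∈ SP := (Finset.mem_filter.mp hp).2
      have hbr : ⁅P p.1, P p.2⁆ = 0 := by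
        apply hP3 p.1 p.2 hsm
        intro i
        constructor
        · rintro ⟨h1, h2⟩
          apply hnsp
          apply Finset.mem_union_left
          apply Finset.mem_image.mpr
          exact ⟨i, Finset.mem_univ i, by rw [← h1, ← h2]⟩
        · rintro ⟨h1, h2⟩
          apply hnsp
          apply Finset.mem_union_right
          apply Finset.mem_image.mpr
          exact ⟨i, Finset.mem_univ i, by rw [← h1, ← h2]⟩
      rw [hbr, smul_zero]
    rw [hzero, add_zero]
    have hfilter : ((B ×ˢ B).filter (fun p => ∑ a, p.1 a ≤ 1)).filter (fun p => p ∈ SP) = SP := by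
      apply Finset.Subset.antisymm
      · exact fun p hp => (Finset.mem_filter.mp hp).2
      · exact fun p hp => Finset.mem_filter.mpr ⟨hsub hp, hp⟩
    rw [hfilter]
    have hsinglene : ∀ (i i' : Fin m) (x y : Fin m ⊕ Fin m), x ≠ y →
        ¬ ((Pi.single x 1 : Fin m ⊕ Fin m → ℕ) = Pi.single y 1) := by
      intro i i' x y hxy h
      have := congrFun h x
      rw [Pi.single_eq_same, Pi.single_eq_of_ne hxy] at this
      exact one_ne_zero this
    have hdisj : Disjoint
        (Finset.univ.image fun i : Fin m =>
          ((Pi.single (inl i) 1 : Fin m ⊕ Fin m → ℕ), (Pi.single (inr i) 1 : Fin m ⊕ Fin m → ℕ)))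
        (Finset.univ.image fun i : Fin m =>
          ((Pi.single (inr i) 1 : Fin m ⊕ Fin m → ℕ), (Pi.single (inl i) 1 : Fin m ⊕ Fin m → ℕ))) := by
      rw [Finset.disjoint_left]
      intro p hp1 hp2
      obtain ⟨i, _, rfl⟩ := Finset.mem_image.mp hp1
      obtain ⟨i', _, heq⟩ := Finset.mem_image.mp hp2
      have h1 := congrArg Prod.fst heq
      simp only at h1
      have := congrFun h1 (inr i')
      rw [Pi.single_eq_same, Pi.single_eq_of_ne (by simp : (inr i' : Fin m ⊕ Fin m) ≠ inl i)] at this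
      omega
    have hinj1 : ∀ i ∈ (Finset.univ : Finset (Fin m)), ∀ i' ∈ (Finset.univ : Finset (Fin m)),
        ((Pi.single (inl i) 1 : Fin m ⊕ Fin m → ℕ), (Pi.single (inr i) 1 : Fin m ⊕ Fin m → ℕ))
          = ((Pi.single (inl i') 1 : Fin m ⊕ Fin m → ℕ), (Pi.single (inr i') 1 : Fin m ⊕ Fin m → ℕ))
        → i = i' := by
      intro i _ i' _ h
      by_contra hne
      have h1 := congrArg Prod.fst h
      simp only at h1
      have := congrFun h1 (inl i)
      rw [Pi.single_eq_same, Pi.single_eq_of_ne (by simpa using hne)] at this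
      omega
    have hinj2 : ∀ i ∈ (Finset.univ : Finset (Fin m)), ∀ i' ∈ (Finset.univ : Finset (Fin m)),
        ((Pi.single (inr i) 1 : Fin m ⊕ Fin m → ℕ), (Pi.single (inl i) 1 : Fin m ⊕ Fin m → ℕ))
          = ((Pi.single (inr i') 1 : Fin m ⊕ Fin m → ℕ), (Pi.single (inl i') 1 : Fin m ⊕ Fin m → ℕ))
        → i = i' := by
      intro i _ i' _ h
      by_contra hne
      have h1 := congrArg Prod.fst h
      simp only at h1
      have := congrFun h1 (inr i)
      rw [Pi.single_eq_same, Pi.single_eq_of_ne (by simpa using hne)] at this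
      omega
    rw [hSP, Finset.sum_union hdisj, Finset.sum_image hinj1, Finset.sum_image hinj2]
    simp only [hP2, hP2', coefC_single]
    rw [omegaC_eq, ← Finset.sum_neg_distrib, Finset.sum_smul, ← Finset.sum_add_distrib]
    apply Finset.sum_congr rfl
    intro i _
    rw [smul_neg, ← neg_smul, ← add_smul]
    congr 1
    ring
  -- region 3
  have hR3 : ∑ p ∈ ((B ×ˢ B).filter (fun p => ¬ ∑ a, p.1 a ≤ 1)).filter (fun p => ¬ ∑ a, p.2 a ≤ 1),
      (coefC r p.1 * coefC s p.2) • ⁅P p.1, P p.2⁆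
      = omegaC r s • ∑ p ∈ B.erase 0 ×ˢ B.erase 0,
          (coefC r p.1 * coefC s p.2) • P (p.1 + p.2) := by
    have hg : ∀ p ∈ ((B ×ˢ B).filter (fun p => ¬ ∑ a, p.1 a ≤ 1)).filter
        (fun p => ¬ ∑ a, p.2 a ≤ 1),
        (coefC r p.1 * coefC s p.2) • ⁅P p.1, P p.2⁆
        = (∑ i : Fin m, ((coefC r p.1 * coefC s p.2) * ((p.1 (inr i) * p.2 (inl i) : ℕ) : ℂ)) •
            P (p.1 + p.2 - (Pi.single (inr i) 1 + Pi.single (inl i) 1)))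
          - (∑ i : Fin m, ((coefC r p.1 * coefC s p.2) * ((p.1 (inl i) * p.2 (inr i) : ℕ) : ℂ)) •
            P (p.1 + p.2 - (Pi.single (inl i) 1 + Pi.single (inr i) 1))) := by
      intro p hp
      have hb2 : 1 < ∑ a, p.2 a := Nat.lt_of_not_le (Finset.mem_filter.mp hp).2
      have hb1 : 1 < ∑ a, p.1 a :=
        Nat.lt_of_not_le (Finset.mem_filter.mp (Finset.mem_filter.mp hp).1).2
      rw [hP1 _ _ hb1 hb2, Finset.smul_sum, ← Finset.sum_sub_distrib]
      apply Finset.sum_congr rfl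
      intro i _
      rw [← Int.cast_smul_eq_zsmul ℂ, smul_smul]
      rw [show Pi.single (inr i) 1 + Pi.single (inl i) 1
          = Pi.single (inl i) 1 + Pi.single (inr i) 1 from add_comm _ _]
      push_cast
      rw [mul_sub, sub_smul]
    rw [Finset.sum_congr rfl hg, Finset.sum_sub_distrib, Finset.sum_comm, Finset.sum_comm
      (s := ((B ×ˢ B).filter (fun p => ¬ ∑ a, p.1 a ≤ 1)).filter (fun p => ¬ ∑ a, p.2 a ≤ 1))]
    have hT1 : ∀ i : Fin m,
        ∑ p ∈ ((B ×ˢ B).filter (fun p => ¬ ∑ a, p.1 a ≤ 1)).filter (fun p => ¬ ∑ a, p.2 a ≤ 1),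
          ((coefC r p.1 * coefC s p.2) * ((p.1 (inr i) * p.2 (inl i) : ℕ) : ℂ)) •
            P (p.1 + p.2 - (Pi.single (inr i) 1 + Pi.single (inl i) 1))
        = ((r (inr i) : ℂ) * (s (inl i) : ℂ)) • ∑ p ∈ B.erase 0 ×ˢ B.erase 0,
            (coefC r p.1 * coefC s p.2) • P (p.1 + p.2) :=
      fun i => Treindex htriv r s (inr i) (inl i) (by simp)
    have hT2 : ∀ i : Fin m,
        ∑ p ∈ ((B ×ˢ B).filter (fun p => ¬ ∑ a, p.1 a ≤ 1)).filter (fun p => ¬ ∑ a, p.2 a ≤ 1),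
          ((coefC r p.1 * coefC s p.2) * ((p.1 (inl i) * p.2 (inr i) : ℕ) : ℂ)) •
            P (p.1 + p.2 - (Pi.single (inl i) 1 + Pi.single (inr i) 1))
        = ((r (inl i) : ℂ) * (s (inr i) : ℂ)) • ∑ p ∈ B.erase 0 ×ˢ B.erase 0,
            (coefC r p.1 * coefC s p.2) • P (p.1 + p.2) :=
      fun i => Treindex htriv r s (inl i) (inr i) (by simp)
    rw [Finset.sum_congr rfl (fun i _ => hT1 i), Finset.sum_congr rfl (fun i _ => hT2 i)]
    rw [← Finset.sum_smul, ← Finset.sum_smul, ← sub_smul, omegaC_eq, ← Finset.sum_sub_distrib]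
  -- splitting sums over B at 0
  have hsplitB : ∀ (G : (Fin m ⊕ Fin m → ℕ) → Module.End ℂ V),
      ∑ j ∈ B, G j = G 0 + ∑ j ∈ B.erase 0, G j :=
    fun G => (Finset.add_sum_erase _ G hB0).symm
  have hHr : Hop k₀ P r = P 0 + ∑ j ∈ B.erase 0, coefC r j • P j := by
    rw [Hop_eq_box hr, hsplitB, coefC_zero, one_smul]
  have hHs : Hop k₀ P s = P 0 + ∑ j ∈ B.erase 0, coefC s j • P j := by
    rw [Hop_eq_box hs, hsplitB, coefC_zero, one_smul]
  have h1 : ∑ w ∈ lowF m k₀, coefC (r + s) w • P w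
      = P 0 + (∑ k ∈ B.erase 0, coefC s k • P k)
        + ((∑ j ∈ B.erase 0, coefC r j • P j)
          + ∑ p ∈ B.erase 0 ×ˢ B.erase 0, (coefC r p.1 * coefC s p.2) • P (p.1 + p.2)) := by
    rw [← fullsum htriv r s, Finset.sum_product, Finset.sum_product]
    rw [← hB]
    simp only [hsplitB]
    rw [Finset.sum_add_distrib]
    simp only [coefC_zero, one_mul, mul_one, one_smul, zero_add, add_zero]
  have hQe : ∑ p ∈ B.erase 0 ×ˢ B.erase 0, (coefC r p.1 * coefC s p.2) • P (p.1 + p.2)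
      = (∑ w ∈ lowF m k₀, coefC (r + s) w • P w)
        - Hop k₀ P r - Hop k₀ P s + P 0 := by
    rw [h1, hHr, hHs]
    abel
  -- assemble
  rw [hexp, hpart, hR1, hR2, hR3, hQe, add_zero]
  by_cases hrs : r + s = 0
  · have hs' : s = -r := by
      funext a
      have := congrFun hrs a
      simp only [Pi.add_apply, Pi.zero_apply] at this
      simp only [Pi.neg_apply]
      omega
    rw [hs', omegaC_neg_self]
    simp
  · rw [← Hop_eq_low htriv hrs]
    module
end keysec2

/-- Let `V` be a finite dimensional module for `𝔥_N⁺ ⊕ heis_N` (given by operators `P^{(k)}`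
satisfying the corresponding bracket relations) on which `⊕_{k ≥ k₀} L_k` acts trivially.
With `H(r) = Σ_k (r^k/k!) P^{(k)}` for `r ≠ 0`, `H(0) = 0`, the formulas
`h(r)(t^s ⊗ v) = Σᵢ (r_{m+i}sᵢ − rᵢs_{m+i}) t^{r+s} ⊗ v + t^{r+s} ⊗ H(r)v` and
`d_a(t^s ⊗ v) = (s_a + λ_a) t^s ⊗ v` define an `H_N`-module structure on `A_N ⊗ V`:
all the commutator relations `[d_a, d_b] = 0`, `[d_a, h(r)] = r_a h(r)` and
`[h(r), h(s)] = Σᵢ (r_{m+i}sᵢ − rᵢs_{m+i}) h(r+s)` hold. -/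
theorem stmt19 {m : ℕ} (hm : 0 < m) {V : Type*} [AddCommGroup V] [Module ℂ V]
    [FiniteDimensional ℂ V]
    (P : (Fin m ⊕ Fin m → ℕ) → Module.End ℂ V)
    (hP1 : ∀ j k : Fin m ⊕ Fin m → ℕ, 1 < ∑ a, j a → 1 < ∑ a, k a →
      ⁅P j, P k⁆ = ∑ i : Fin m,
        (((j (inr i) * k (inl i) : ℕ) : ℤ) - ((j (inl i) * k (inr i) : ℕ) : ℤ)) •
          P (j + k - (Pi.single (inl i) 1 + Pi.single (inr i) 1)))
    (hP2 : ∀ i : Fin m, ⁅P (Pi.single (inl i) 1), P (Pi.single (inr i) 1)⁆ = P 0)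
    (hP2' : ∀ i : Fin m, ⁅P (Pi.single (inr i) 1), P (Pi.single (inl i) 1)⁆ = -(P 0))
    (hP3 : ∀ j k : Fin m ⊕ Fin m → ℕ, (∑ a, j a) ≤ 1 →
      (∀ i : Fin m, ¬(j = Pi.single (inl i) 1 ∧ k = Pi.single (inr i) 1) ∧
        ¬(j = Pi.single (inr i) 1 ∧ k = Pi.single (inl i) 1)) →
      ⁅P j, P k⁆ = 0)
    (k₀ : ℕ) (htriv : ∀ k : Fin m ⊕ Fin m → ℕ, k₀ ≤ ∑ a, k a → P k = 0)
    (lam : Fin m ⊕ Fin m → ℂ) :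
    (∀ a b : Fin m ⊕ Fin m,
      ⁅(Dop lam a : Module.End ℂ ((Fin m ⊕ Fin m → ℤ) → V)), (Dop lam b : Module.End ℂ ((Fin m ⊕ Fin m → ℤ) → V))⁆ = 0) ∧
    (∀ (a : Fin m ⊕ Fin m) (r : Fin m ⊕ Fin m → ℤ),
      ⁅(Dop lam a : Module.End ℂ ((Fin m ⊕ Fin m → ℤ) → V)), hop k₀ P r⁆ = (r a : ℂ) • hop k₀ P r) ∧
    (∀ r s : Fin m ⊕ Fin m → ℤ,
      ⁅hop k₀ P r, hop k₀ P s⁆ = ∑ i : Fin m,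
        ((r (inr i) * s (inl i) - r (inl i) * s (inr i) : ℤ) : ℂ) • hop k₀ P (r + s)) := by
  refine ⟨?_, ?_, ?_⟩
  · -- [d_a, d_b] = 0
    intro a b
    rw [Ring.lie_def, sub_eq_zero]
    apply LinearMap.ext
    intro f
    funext t
    simp only [Module.End.mul_apply]
    show ((t a : ℂ) + lam a) • (((t b : ℂ) + lam b) • f t)
        = ((t b : ℂ) + lam b) • (((t a : ℂ) + lam a) • f t)
    rw [smul_smul, smul_smul, mul_comm]
  · -- [d_a, h(r)] = r_a h(r)
    intro a r
    rw [Ring.lie_def]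
    apply LinearMap.ext
    intro f
    funext t
    simp only [LinearMap.sub_apply, Module.End.mul_apply, LinearMap.smul_apply, Pi.sub_apply,
      Pi.smul_apply, hop_apply]
    show ((t a : ℂ) + lam a) • (omegaC r (t - r) • f (t - r) + Hop k₀ P r (f (t - r)))
        - (omegaC r (t - r) • ((((t - r) a : ℂ) + lam a) • f (t - r))
          + Hop k₀ P r ((((t - r) a : ℂ) + lam a) • f (t - r)))
      = (r a : ℂ) • (omegaC r (t - r) • f (t - r) + Hop k₀ P r (f (t - r)))
    rw [map_smul]
    have hcast : (((t - r) a : ℂ)) = (t a : ℂ) - (r a : ℂ) := by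
      rw [Pi.sub_apply]; push_cast; ring
    rw [hcast]
    match_scalars <;> ring
  · -- [h(r), h(s)] = ω(r,s) h(r+s)
    intro r s
    have hrhs : (∑ i : Fin m, ((r (inr i) * s (inl i) - r (inl i) * s (inr i) : ℤ) : ℂ)
          • hop k₀ P (r + s))
        = omegaC r s • hop k₀ P (r + s) := by
      rw [← Finset.sum_smul]; rfl
    rw [hrhs, Ring.lie_def]
    apply LinearMap.ext
    intro f
    funext t
    simp only [LinearMap.sub_apply, Module.End.mul_apply, LinearMap.smul_apply, Pi.sub_apply,
      Pi.smul_apply, hop_apply]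
    rw [show t - s - r = t - r - s from sub_right_comm t s r,
      show t - (r + s) = t - r - s from sub_add_eq_sub_sub t r s]
    rw [map_add, map_add, map_smul, map_smul]
    have hk : Hop k₀ P r (Hop k₀ P s (f (t - r - s)))
        = omegaC r s • (Hop k₀ P (r + s) (f (t - r - s)) - Hop k₀ P r (f (t - r - s))
            - Hop k₀ P s (f (t - r - s)))
          + Hop k₀ P s (Hop k₀ P r (f (t - r - s))) := by
      have h0 := LinearMap.congr_fun (keyH hP1 hP2 hP2' hP3 htriv r s) (f (t - r - s))
      simp only [Ring.lie_def, LinearMap.sub_apply, Module.End.mul_apply,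
        LinearMap.smul_apply] at h0
      rw [← h0]
      abel
    rw [hk]
    have e1 : omegaC r (t - r) = omegaC r (t - r - s) + omegaC r s := by
      have h := omegaC_add_right r (t - r - s) s
      rw [show t - r - s + s = t - r by abel] at h
      rw [h]
    have e2 : omegaC s (t - s) = omegaC s (t - r - s) - omegaC r s := by
      have h := omegaC_add_right s (t - r - s) r
      rw [show t - r - s + r = t - s by abel] at h
      rw [h, omegaC_skew r s]
      ring
    have e3 : omegaC (r + s) (t - r - s) = omegaC r (t - r - s) + omegaC s (t - r - s) :=
      omegaC_add_left r s (t - r - s)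
    rw [e1, e2, e3]
    match_scalars <;> ring
end
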